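/- Suppose F is a regular class of first-order formulas in the language of digraphs and the digraph G is definable in F (some sentence in F defines G). Then L_F(G) < Tower(D_F(G) + log* D_F(G) + 2), where D_F(G) (respectively L_F(G)) is the minimum quantifier rank (respectively minimum length) of a sentence in F defining G. -/

import Mathlib

namespace PaperFO

/-- First-order formulas in a language with equality `eq` and one binary
relation symbol `rel` (adjacency `~` for graphs, the arc relation `↦` for
digraphs).  Variables are indexed by natural numbers (variable `xᵢ` of the
paper corresponds to `i - 1 : ℕ`). -/
inductive Fml : Type
  | eq : ℕ → ℕ → Fml
  | rel : ℕ → ℕ → Fml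
  | not : Fml → Fml
  | and : Fml → Fml → Fml
  | or : Fml → Fml → Fml
  | all : ℕ → Fml → Fml
  | ex : ℕ → Fml → Fml

namespace Fml

/-- Truth of a formula in the structure `(V, r)` under the assignment `σ`. -/
def eval {V : Type} (r : V → V → Prop) (σ : ℕ → V) : Fml → Prop
  | eq i j => σ i = σ j
  | rel i j => r (σ i) (σ j)
  | not φ => ¬ eval r σ φ
  | and φ ψ => eval r σ φ ∧ eval r σ ψ
  | or φ ψ => eval r σ φ ∨ eval r σ ψ
  | all i φ => ∀ v : V, eval r (Function.update σ i v) φ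
  | ex i φ => ∃ v : V, eval r (Function.update σ i v) φ

/-- The free variables of a formula. -/
def freeVars : Fml → Finset ℕ
  | eq i j => {i, j}
  | rel i j => {i, j}
  | not φ => freeVars φ
  | and φ ψ => freeVars φ ∪ freeVars ψ
  | or φ ψ => freeVars φ ∪ freeVars ψ
  | all i φ => (freeVars φ).erase i
  | ex i φ => (freeVars φ).erase i

/-- A sentence is a formula without free variables. -/
def IsSentence (φ : Fml) : Prop := φ.freeVars = ∅

/-- The quantifier depth (= quantifier rank) of a formula: the maximum
number of nested quantifiers. -/
def depth : Fml → ℕ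
  | eq _ _ => 0
  | rel _ _ => 0
  | not φ => depth φ
  | and φ ψ => max (depth φ) (depth ψ)
  | or φ ψ => max (depth φ) (depth ψ)
  | all _ φ => depth φ + 1
  | ex _ φ => depth φ + 1

/-- A formula is atomic if it is of the form `x = y` or `x ~ y`. -/
def IsAtomic : Fml → Prop
  | eq _ _ => True
  | rel _ _ => True
  | _ => False

/-- Negations occur only in front of atomic subformulas. -/
def NegAtomic : Fml → Prop
  | eq _ _ => True
  | rel _ _ => True
  | not φ => IsAtomic φ
  | and φ ψ => NegAtomic φ ∧ NegAtomic ψ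
  | or φ ψ => NegAtomic φ ∧ NegAtomic ψ
  | all _ φ => NegAtomic φ
  | ex _ φ => NegAtomic φ

/-- The set of maximal sequences of nested quantifiers of a formula,
recorded as lists of Booleans read from the outermost quantifier inwards
(`true` = `∃`, `false` = `∀`).  Every sequence of nested quantifiers of the
formula is a (contiguous) subsequence of one of these. -/
def qstrings : Fml → Set (List Bool)
  | eq _ _ => {[]}
  | rel _ _ => {[]}
  | not φ => qstrings φ
  | and φ ψ => qstrings φ ∪ qstrings ψ
  | or φ ψ => qstrings φ ∪ qstrings ψ
  | all _ φ => (List.cons false) '' qstrings φ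
  | ex _ φ => (List.cons true) '' qstrings φ

end Fml

/-- The number of quantifier alternations (occurrences of `∀∃` or `∃∀`) in a
sequence of nested quantifiers. -/
def altCount : List Bool → ℕ
  | [] => 0
  | [_] => 0
  | a :: b :: l => (if a = b then 0 else 1) + altCount (b :: l)

namespace Fml

/-- Every sequence of nested quantifiers has at most `a` quantifier
alternations. -/
def AltLe (φ : Fml) (a : ℕ) : Prop := ∀ s ∈ φ.qstrings, altCount s ≤ a

/-- An `a`-alternating formula: negations occur only in front of atomic
subformulas and every sequence of nested quantifiers has at most `a`
quantifier alternations. -/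
def AltFml (a : ℕ) (φ : Fml) : Prop := φ.NegAtomic ∧ φ.AltLe a

/-- A 0-alternating formula: negations occur only in front of atomic
subformulas and no sequence of nested quantifiers contains a quantifier
alternation. -/
def ZeroAlt (φ : Fml) : Prop := φ.NegAtomic ∧ φ.AltLe 0

end Fml

/-- `logStar n` is the minimum number of iterations of the binary logarithm
needed to bring `n` to `1` or below. -/
def logStar (n : ℕ) : ℕ :=
  if h : n ≤ 1 then 0 else logStar (Nat.log 2 n) + 1
decreasing_by exact Nat.log_lt_self 2 (by omega)

/-- The tower function: `tower 0 = 1`, `tower (i+1) = 2 ^ tower i`. -/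
def tower : ℕ → ℕ
  | 0 => 1
  | i + 1 => 2 ^ tower i

end PaperFO

namespace PaperFO

/-- A sentence is true on the digraph `(V, r)` (digraphs interpret `Fml.rel`
as the arc relation `↦`). -/
def DModels {V : Type} (r : V → V → Prop) (φ : Fml) : Prop :=
  ∀ σ : ℕ → V, φ.eval r σ

/-- Isomorphism of digraphs. -/
def DIso {V W : Type} (r : V → V → Prop) (r' : W → W → Prop) : Prop :=
  ∃ e : V ≃ W, ∀ a b : V, r a b ↔ r' (e a) (e b)

/-- The sentence `φ` defines the digraph `(V, r)`: it is a sentence, it is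
true on `(V, r)`, and it fails on every (finite, nonempty) digraph not
isomorphic to `(V, r)`. -/
def DDefines {V : Type} (r : V → V → Prop) (φ : Fml) : Prop :=
  φ.IsSentence ∧ DModels r φ ∧
    ∀ (W : Type) (_ : Fintype W) (_ : Nonempty W) (r' : W → W → Prop),
      ¬ DIso r r' → ¬ DModels r' φ

end PaperFO

namespace PaperFO
namespace Fml

/-- The length of a formula: the total number of symbols (an atomic formula
`x = y` or `x ~ y` contributes `3` symbols, a negation `1`, a binary
connective `1`, and a quantifier together with its variable `2`). -/
def len : Fml → ℕ
  | eq _ _ => 3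
  | rel _ _ => 3
  | not φ => len φ + 1
  | and φ ψ => len φ + len ψ + 1
  | or φ ψ => len φ + len ψ + 1
  | all _ φ => len φ + 2
  | ex _ φ => len φ + 2

/-- The number of occurrences of the existential quantifier. -/
def exCount : Fml → ℕ
  | eq _ _ => 0
  | rel _ _ => 0
  | not φ => exCount φ
  | and φ ψ => exCount φ + exCount ψ
  | or φ ψ => exCount φ + exCount ψ
  | all _ φ => exCount φ
  | ex _ φ => exCount φ + 1

/-- The total number of quantifier occurrences. -/
def qCount : Fml → ℕ
  | eq _ _ => 0
  | rel _ _ => 0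
  | not φ => qCount φ
  | and φ ψ => qCount φ + qCount ψ
  | or φ ψ => qCount φ + qCount ψ
  | all _ φ => qCount φ + 1
  | ex _ φ => qCount φ + 1

/-- Implication `A ⇒ B`, a shorthand for `(¬ A) ∨ B`. -/
def imp (A B : Fml) : Fml := .or (.not A) B

end Fml
end PaperFO

namespace PaperFO
namespace Fml

/-- All variables occurring (free or bound) in a formula. -/
def vars : Fml → Finset ℕ
  | eq i j => {i, j}
  | rel i j => {i, j}
  | not φ => vars φ
  | and φ ψ => vars φ ∪ vars ψ
  | or φ ψ => vars φ ∪ vars ψ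
  | all i φ => insert i (vars φ)
  | ex i φ => insert i (vars φ)

/-- Substitution of the variable `j` for the free occurrences of the
variable `i`. -/
def subst (i j : ℕ) : Fml → Fml
  | eq a b => eq (if a = i then j else a) (if b = i then j else b)
  | rel a b => rel (if a = i then j else a) (if b = i then j else b)
  | not φ => not (subst i j φ)
  | and φ ψ => and (subst i j φ) (subst i j ψ)
  | or φ ψ => or (subst i j φ) (subst i j ψ)
  | all a φ => if a = i then all a φ else all a (subst i j φ)
  | ex a φ => if a = i then ex a φ else ex a (subst i j φ)

/-- One step of renaming a bound variable (possibly deep inside the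
formula). -/
inductive RenStep : Fml → Fml → Prop
  | allRen (i j : ℕ) (φ : Fml) : j ∉ φ.vars → RenStep (.all i φ) (.all j (φ.subst i j))
  | exRen (i j : ℕ) (φ : Fml) : j ∉ φ.vars → RenStep (.ex i φ) (.ex j (φ.subst i j))
  | notC {φ φ' : Fml} : RenStep φ φ' → RenStep (.not φ) (.not φ')
  | andL {φ φ' ψ : Fml} : RenStep φ φ' → RenStep (.and φ ψ) (.and φ' ψ)
  | andR {φ ψ ψ' : Fml} : RenStep ψ ψ' → RenStep (.and φ ψ) (.and φ ψ')
  | orL {φ φ' ψ : Fml} : RenStep φ φ' → RenStep (.or φ ψ) (.or φ' ψ)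
  | orR {φ ψ ψ' : Fml} : RenStep ψ ψ' → RenStep (.or φ ψ) (.or φ ψ')
  | allC {i : ℕ} {φ φ' : Fml} : RenStep φ φ' → RenStep (.all i φ) (.all i φ')
  | exC {i : ℕ} {φ φ' : Fml} : RenStep φ φ' → RenStep (.ex i φ) (.ex i φ')

/-- `B` is obtained from `A` by renaming bound variables. -/
def Renames (A B : Fml) : Prop := Relation.ReflTransGen RenStep A B

/-- `Subf B A` : `B` is a subformula of `A`. -/
inductive Subf : Fml → Fml → Prop
  | refl (φ : Fml) : Subf φ φ
  | notS {ψ φ : Fml} : Subf ψ φ → Subf ψ (.not φ)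
  | andL {ψ φ χ : Fml} : Subf ψ φ → Subf ψ (.and φ χ)
  | andR {ψ φ χ : Fml} : Subf ψ χ → Subf ψ (.and φ χ)
  | orL {ψ φ χ : Fml} : Subf ψ φ → Subf ψ (.or φ χ)
  | orR {ψ φ χ : Fml} : Subf ψ χ → Subf ψ (.or φ χ)
  | allS {ψ φ : Fml} {i : ℕ} : Subf ψ φ → Subf ψ (.all i φ)
  | exS {ψ φ : Fml} {i : ℕ} : Subf ψ φ → Subf ψ (.ex i φ)

/-- The maximal sequences of nested quantifiers of a formula together with
the quantified variables (`true` = `∃`, `false` = `∀`). -/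
def qvseqs : Fml → Set (List (Bool × ℕ))
  | eq _ _ => {[]}
  | rel _ _ => {[]}
  | not φ => qvseqs φ
  | and φ ψ => qvseqs φ ∪ qvseqs ψ
  | or φ ψ => qvseqs φ ∪ qvseqs ψ
  | all i φ => (List.cons (false, i)) '' qvseqs φ
  | ex i φ => (List.cons (true, i)) '' qvseqs φ

end Fml

/-- A formula `A(x_1,…,x_s)` of quantifier rank `k - s` is normal if all
negations stay in front of atomic subformulas, `A` has occurrences of the
variables `x_1, …, x_k` only, its free variables are exactly `x_1, …, x_s`,
and every sequence of nested quantifiers of `A` has length `k - s` and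
quantifies the variables `x_{s+1}, …, x_k` exactly in this order.
(Variable `x_i` is represented by `i - 1 : ℕ`.) -/
def Normal (s k : ℕ) (A : Fml) : Prop :=
  A.NegAtomic ∧ A.freeVars = Finset.range s ∧ A.vars ⊆ Finset.range k ∧
    A.depth = k - s ∧
    ∀ t ∈ A.qvseqs, t.map Prod.snd = List.range' s (k - s)

/-- Two formulas are (logically) equivalent if they have the same truth
value in every finite nonempty digraph under every assignment. -/
def FmlEquiv (A B : Fml) : Prop :=
  ∀ (W : Type) (_ : Fintype W) (_ : Nonempty W) (r : W → W → Prop) (σ : ℕ → W),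
    A.eval r σ ↔ B.eval r σ

/-- A regular class `F` of first-order formulas: `F` is closed under
subformulas and under renaming of bound variables; with each formula
`A(x_1,…,x_s)` it contains a normal form of `A` (a normal formula of the
same quantifier rank equivalent to `A`); and for each `k ≥ 1` it has a
pattern set `P^k ⊆ {∀,∃}^k` such that a normal sentence `A` of quantifier
rank `k` belongs to `F` iff every sequence of nested quantifiers of `A`
belongs to `P^k`. -/
def Regular (F : Set Fml) : Prop :=
  (∀ A ∈ F, ∀ B : Fml, Fml.Subf B A → B ∈ F) ∧
  (∀ A ∈ F, ∀ B : Fml, Fml.Renames A B → B ∈ F) ∧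
  (∀ A ∈ F, ∀ s : ℕ, A.freeVars = Finset.range s →
    ∃ A' ∈ F, Normal s (s + A.depth) A' ∧ A'.depth = A.depth ∧ FmlEquiv A A') ∧
  (∀ k : ℕ, 1 ≤ k → ∃ P : Set (List Bool), (∀ t ∈ P, t.length = k) ∧
    ∀ A : Fml, Normal 0 k A → (A ∈ F ↔ A.qstrings ⊆ P))

end PaperFO

namespace PaperFO

namespace Aux

open Fml

attribute [local instance] Classical.propDecidable

/-! ### Basic lemmas about formulas -/

theorem qstrings_nonempty : ∀ φ : Fml, φ.qstrings.Nonempty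
  | .eq _ _ => ⟨[], rfl⟩
  | .rel _ _ => ⟨[], rfl⟩
  | .not φ => qstrings_nonempty φ
  | .and φ _ => by
      obtain ⟨t, ht⟩ := qstrings_nonempty φ
      exact ⟨t, Or.inl ht⟩
  | .or φ _ => by
      obtain ⟨t, ht⟩ := qstrings_nonempty φ
      exact ⟨t, Or.inl ht⟩
  | .all i φ => by
      obtain ⟨t, ht⟩ := qstrings_nonempty φ
      exact ⟨false :: t, ⟨t, ht, rfl⟩⟩
  | .ex i φ => by
      obtain ⟨t, ht⟩ := qstrings_nonempty φ
      exact ⟨true :: t, ⟨t, ht, rfl⟩⟩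

theorem qvseqs_nonempty : ∀ φ : Fml, φ.qvseqs.Nonempty
  | .eq _ _ => ⟨[], rfl⟩
  | .rel _ _ => ⟨[], rfl⟩
  | .not φ => qvseqs_nonempty φ
  | .and φ _ => by
      obtain ⟨t, ht⟩ := qvseqs_nonempty φ
      exact ⟨t, Or.inl ht⟩
  | .or φ _ => by
      obtain ⟨t, ht⟩ := qvseqs_nonempty φ
      exact ⟨t, Or.inl ht⟩
  | .all i φ => by
      obtain ⟨t, ht⟩ := qvseqs_nonempty φ
      exact ⟨(false, i) :: t, ⟨t, ht, rfl⟩⟩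
  | .ex i φ => by
      obtain ⟨t, ht⟩ := qvseqs_nonempty φ
      exact ⟨(true, i) :: t, ⟨t, ht, rfl⟩⟩

theorem qstrings_eq_image : ∀ φ : Fml, φ.qstrings = (List.map Prod.fst) '' φ.qvseqs
  | .eq _ _ => by simp [Fml.qstrings, Fml.qvseqs]
  | .rel _ _ => by simp [Fml.qstrings, Fml.qvseqs]
  | .not φ => qstrings_eq_image φ
  | .and φ ψ => by
      simp [Fml.qstrings, Fml.qvseqs, qstrings_eq_image φ, qstrings_eq_image ψ,
        Set.image_union]
  | .or φ ψ => by
      simp [Fml.qstrings, Fml.qvseqs, qstrings_eq_image φ, qstrings_eq_image ψ,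
        Set.image_union]
  | .all i φ => by
      simp only [Fml.qstrings, Fml.qvseqs, qstrings_eq_image φ, ← Set.image_comp]
      rfl
  | .ex i φ => by
      simp only [Fml.qstrings, Fml.qvseqs, qstrings_eq_image φ, ← Set.image_comp]
      rfl

/-- Evaluation only depends on the values of the assignment on free variables. -/
theorem eval_congr {W : Type} (r' : W → W → Prop) :
    ∀ (φ : Fml) (σ σ' : ℕ → W), (∀ i ∈ φ.freeVars, σ i = σ' i) →
      (φ.eval r' σ ↔ φ.eval r' σ')
  | .eq a b, σ, σ', h => by
      have ha := h a (by simp [Fml.freeVars])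
      have hb := h b (by simp [Fml.freeVars])
      simp [Fml.eval, ha, hb]
  | .rel a b, σ, σ', h => by
      have ha := h a (by simp [Fml.freeVars])
      have hb := h b (by simp [Fml.freeVars])
      simp [Fml.eval, ha, hb]
  | .not φ, σ, σ', h => by
      simp only [Fml.eval]
      exact not_congr (eval_congr r' φ σ σ' h)
  | .and φ ψ, σ, σ', h => by
      simp only [Fml.eval]
      exact and_congr
        (eval_congr r' φ σ σ' fun i hi => h i (by simp [Fml.freeVars, hi]))
        (eval_congr r' ψ σ σ' fun i hi => h i (by simp [Fml.freeVars, hi]))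
  | .or φ ψ, σ, σ', h => by
      simp only [Fml.eval]
      exact or_congr
        (eval_congr r' φ σ σ' fun i hi => h i (by simp [Fml.freeVars, hi]))
        (eval_congr r' ψ σ σ' fun i hi => h i (by simp [Fml.freeVars, hi]))
  | .all i φ, σ, σ', h => by
      simp only [Fml.eval]
      refine forall_congr' fun v => eval_congr r' φ _ _ fun k hk => ?_
      rcases eq_or_ne k i with rfl | hne
      · simp [Function.update]
      · simp only [Function.update, dif_neg hne]
        exact h k (Finset.mem_erase.2 ⟨hne, hk⟩)
  | .ex i φ, σ, σ', h => by
      simp only [Fml.eval]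
      refine exists_congr fun v => eval_congr r' φ _ _ fun k hk => ?_
      rcases eq_or_ne k i with rfl | hne
      · simp [Function.update]
      · simp only [Function.update, dif_neg hne]
        exact h k (Finset.mem_erase.2 ⟨hne, hk⟩)

end Aux
namespace Aux
open Fml

/-! ### Big conjunctions and disjunctions -/

def bigAnd : List Fml → Fml
  | [] => .eq 0 0
  | [φ] => φ
  | φ :: ψ :: l => .and φ (bigAnd (ψ :: l))

def bigOr : List Fml → Fml
  | [] => .not (.eq 0 0)
  | [φ] => φ
  | φ :: ψ :: l => .or φ (bigOr (ψ :: l))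

theorem eval_bigAnd {W : Type} (r' : W → W → Prop) (σ : ℕ → W) :
    ∀ L : List Fml, (bigAnd L).eval r' σ ↔ ∀ φ ∈ L, φ.eval r' σ
  | [] => by simp [bigAnd, Fml.eval]
  | [φ] => by simp [bigAnd]
  | φ :: ψ :: l => by
      simp only [bigAnd, Fml.eval, eval_bigAnd r' σ (ψ :: l), List.mem_cons]
      constructor
      · rintro ⟨h1, h2⟩ χ (rfl | hχ)
        · exact h1
        · exact h2 χ (by simpa using hχ)
      · intro h
        exact ⟨h φ (Or.inl rfl), fun χ hχ => h χ (by simpa using Or.inr hχ)⟩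

theorem eval_bigOr {W : Type} (r' : W → W → Prop) (σ : ℕ → W) :
    ∀ L : List Fml, (bigOr L).eval r' σ ↔ ∃ φ ∈ L, φ.eval r' σ
  | [] => by simp [bigOr, Fml.eval]
  | [φ] => by simp [bigOr]
  | φ :: ψ :: l => by
      simp only [bigOr, Fml.eval, eval_bigOr r' σ (ψ :: l), List.mem_cons]
      constructor
      · rintro (h1 | ⟨χ, hχ, h2⟩)
        · exact ⟨φ, Or.inl rfl, h1⟩
        · exact ⟨χ, Or.inr hχ, h2⟩
      · rintro ⟨χ, (rfl | hχ), h2⟩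
        · exact Or.inl h2
        · exact Or.inr ⟨χ, hχ, h2⟩

theorem len_bigAnd (M : ℕ) : ∀ L : List Fml, (∀ φ ∈ L, φ.len ≤ M) →
    (bigAnd L).len ≤ 3 + L.length * (M + 1)
  | [], _ => by simp [bigAnd, Fml.len]
  | [φ], h => by
      have := h φ (by simp)
      simp only [bigAnd, List.length_cons, List.length_nil]
      omega
  | φ :: ψ :: l, h => by
      have h1 := h φ (by simp)
      have h2 := len_bigAnd M (ψ :: l) (fun χ hχ => h χ (by simp [hχ]))
      have h3 : (l.length + 1 + 1) * (M + 1) = (l.length + 1) * (M + 1) + (M + 1) := by ring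
      simp only [bigAnd, Fml.len, List.length_cons] at *
      omega

theorem len_bigOr (M : ℕ) : ∀ L : List Fml, (∀ φ ∈ L, φ.len ≤ M) →
    (bigOr L).len ≤ 4 + L.length * (M + 1)
  | [], _ => by simp [bigOr, Fml.len]
  | [φ], h => by
      have := h φ (by simp)
      simp only [bigOr, List.length_cons, List.length_nil]
      omega
  | φ :: ψ :: l, h => by
      have h1 := h φ (by simp)
      have h2 := len_bigOr M (ψ :: l) (fun χ hχ => h χ (by simp [hχ]))
      have h3 : (l.length + 1 + 1) * (M + 1) = (l.length + 1) * (M + 1) + (M + 1) := by ring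
      simp only [bigOr, Fml.len, List.length_cons] at *
      omega

theorem depth_bigAnd (d : ℕ) : ∀ L : List Fml, L ≠ [] → (∀ φ ∈ L, φ.depth = d) →
    (bigAnd L).depth = d
  | [], h, _ => absurd rfl h
  | [φ], _, h => by simpa [bigAnd] using h φ (by simp)
  | φ :: ψ :: l, _, h => by
      have h1 := h φ (by simp)
      have h2 := depth_bigAnd d (ψ :: l) (by simp) (fun χ hχ => h χ (by simp [hχ]))
      simp [bigAnd, Fml.depth, h1, h2]

theorem depth_bigOr (d : ℕ) : ∀ L : List Fml, L ≠ [] → (∀ φ ∈ L, φ.depth = d) →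
    (bigOr L).depth = d
  | [], h, _ => absurd rfl h
  | [φ], _, h => by simpa [bigOr] using h φ (by simp)
  | φ :: ψ :: l, _, h => by
      have h1 := h φ (by simp)
      have h2 := depth_bigOr d (ψ :: l) (by simp) (fun χ hχ => h χ (by simp [hχ]))
      simp [bigOr, Fml.depth, h1, h2]

theorem negAtomic_bigAnd : ∀ L : List Fml, (∀ φ ∈ L, φ.NegAtomic) →
    (bigAnd L).NegAtomic
  | [], _ => trivial
  | [φ], h => h φ (by simp)
  | φ :: ψ :: l, h =>
      ⟨h φ (by simp), negAtomic_bigAnd (ψ :: l) (fun χ hχ => h χ (by simp [hχ]))⟩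

theorem negAtomic_bigOr : ∀ L : List Fml, (∀ φ ∈ L, φ.NegAtomic) →
    (bigOr L).NegAtomic
  | [], _ => trivial
  | [φ], h => h φ (by simp)
  | φ :: ψ :: l, h =>
      ⟨h φ (by simp), negAtomic_bigOr (ψ :: l) (fun χ hχ => h χ (by simp [hχ]))⟩

theorem qstrings_bigAnd (S : Set (List Bool)) : ∀ L : List Fml, [] ∈ S →
    (∀ φ ∈ L, φ.qstrings ⊆ S) → (bigAnd L).qstrings ⊆ S
  | [], h, _ => by
      intro t ht
      simp only [bigAnd, Fml.qstrings, Set.mem_singleton_iff] at ht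
      simpa [ht] using h
  | [φ], _, h => h φ (by simp)
  | φ :: ψ :: l, h0, h => by
      intro t ht
      rcases ht with ht | ht
      · exact h φ (by simp) ht
      · exact qstrings_bigAnd S (ψ :: l) h0 (fun χ hχ => h χ (by simp [hχ])) ht

theorem qstrings_bigOr (S : Set (List Bool)) : ∀ L : List Fml, [] ∈ S →
    (∀ φ ∈ L, φ.qstrings ⊆ S) → (bigOr L).qstrings ⊆ S
  | [], h, _ => by
      intro t ht
      simp only [bigOr, Fml.qstrings, Set.mem_singleton_iff] at ht
      simpa [ht] using h
  | [φ], _, h => h φ (by simp)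
  | φ :: ψ :: l, h0, h => by
      intro t ht
      rcases ht with ht | ht
      · exact h φ (by simp) ht
      · exact qstrings_bigOr S (ψ :: l) h0 (fun χ hχ => h χ (by simp [hχ])) ht

theorem qvseqs_bigAnd (S : Set (List (Bool × ℕ))) : ∀ L : List Fml, [] ∈ S →
    (∀ φ ∈ L, φ.qvseqs ⊆ S) → (bigAnd L).qvseqs ⊆ S
  | [], h, _ => by
      intro t ht
      simp only [bigAnd, Fml.qvseqs, Set.mem_singleton_iff] at ht
      simpa [ht] using h
  | [φ], _, h => h φ (by simp)
  | φ :: ψ :: l, h0, h => by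
      intro t ht
      rcases ht with ht | ht
      · exact h φ (by simp) ht
      · exact qvseqs_bigAnd S (ψ :: l) h0 (fun χ hχ => h χ (by simp [hχ])) ht

theorem qvseqs_bigOr (S : Set (List (Bool × ℕ))) : ∀ L : List Fml, [] ∈ S →
    (∀ φ ∈ L, φ.qvseqs ⊆ S) → (bigOr L).qvseqs ⊆ S
  | [], h, _ => by
      intro t ht
      simp only [bigOr, Fml.qvseqs, Set.mem_singleton_iff] at ht
      simpa [ht] using h
  | [φ], _, h => h φ (by simp)
  | φ :: ψ :: l, h0, h => by
      intro t ht
      rcases ht with ht | ht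
      · exact h φ (by simp) ht
      · exact qvseqs_bigOr S (ψ :: l) h0 (fun χ hχ => h χ (by simp [hχ])) ht

theorem freeVars_bigAnd (S : Finset ℕ) : ∀ L : List Fml, L ≠ [] →
    (∀ φ ∈ L, φ.freeVars ⊆ S) → (bigAnd L).freeVars ⊆ S
  | [], h, _ => absurd rfl h
  | [φ], _, h => h φ (by simp)
  | φ :: ψ :: l, _, h => by
      simp only [bigAnd, Fml.freeVars]
      exact Finset.union_subset (h φ (by simp))
        (freeVars_bigAnd S (ψ :: l) (by simp) (fun χ hχ => h χ (by simp [hχ])))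

theorem freeVars_bigOr (S : Finset ℕ) : ∀ L : List Fml, L ≠ [] →
    (∀ φ ∈ L, φ.freeVars ⊆ S) → (bigOr L).freeVars ⊆ S
  | [], h, _ => absurd rfl h
  | [φ], _, h => h φ (by simp)
  | φ :: ψ :: l, _, h => by
      simp only [bigOr, Fml.freeVars]
      exact Finset.union_subset (h φ (by simp))
        (freeVars_bigOr S (ψ :: l) (by simp) (fun χ hχ => h χ (by simp [hχ])))

theorem vars_bigAnd (S : Finset ℕ) : ∀ L : List Fml, (0 ∈ S) →
    (∀ φ ∈ L, φ.vars ⊆ S) → (bigAnd L).vars ⊆ S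
  | [], h0, _ => by
      intro t ht
      simp only [bigAnd, Fml.vars, Finset.mem_insert, Finset.mem_singleton, or_self] at ht
      simpa [ht] using h0
  | [φ], _, h => h φ (by simp)
  | φ :: ψ :: l, h0, h => by
      simp only [bigAnd, Fml.vars]
      exact Finset.union_subset (h φ (by simp))
        (vars_bigAnd S (ψ :: l) h0 (fun χ hχ => h χ (by simp [hχ])))

theorem vars_bigOr (S : Finset ℕ) : ∀ L : List Fml, (0 ∈ S) →
    (∀ φ ∈ L, φ.vars ⊆ S) → (bigOr L).vars ⊆ S
  | [], h0, _ => by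
      intro t ht
      simp only [bigOr, Fml.vars, Finset.mem_insert, Finset.mem_singleton, or_self] at ht
      simpa [ht] using h0
  | [φ], _, h => h φ (by simp)
  | φ :: ψ :: l, h0, h => by
      simp only [bigOr, Fml.vars]
      exact Finset.union_subset (h φ (by simp))
        (vars_bigOr S (ψ :: l) h0 (fun χ hχ => h χ (by simp [hχ])))

end Aux
namespace Aux

/-! ### Arithmetic of `tower` and `logStar` -/

/-- Iterated exponentiation. -/
def expIter (a : ℕ) (x : ℕ) : ℕ := (fun y => 2 ^ y)^[a] x

@[simp] theorem expIter_zero (x : ℕ) : expIter 0 x = x := rfl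

theorem expIter_succ (a x : ℕ) : expIter (a + 1) x = expIter a (2 ^ x) :=
  Function.iterate_succ_apply _ a x

theorem expIter_succ' (a x : ℕ) : expIter (a + 1) x = 2 ^ expIter a x :=
  Function.iterate_succ_apply' _ a x

theorem tower_add (b a : ℕ) : tower (b + a) = expIter a (tower b) := by
  induction a with
  | zero => rfl
  | succ n ih =>
    rw [expIter_succ', ← ih, ← Nat.add_assoc]
    rfl

theorem expIter_le_expIter (a : ℕ) : ∀ {x y : ℕ}, x ≤ y → expIter a x ≤ expIter a y := by
  induction a with
  | zero => intro x y h; simpa using h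
  | succ n ih =>
    intro x y h
    rw [expIter_succ, expIter_succ]
    exact ih (Nat.pow_le_pow_right (by norm_num) h)

theorem expIter_lt_expIter (a : ℕ) : ∀ {x y : ℕ}, x < y → expIter a x < expIter a y := by
  induction a with
  | zero => intro x y h; simpa using h
  | succ n ih =>
    intro x y h
    rw [expIter_succ, expIter_succ]
    exact ih (Nat.pow_lt_pow_right (by norm_num) h)

theorem one_le_expIter (a : ℕ) {x : ℕ} (hx : 1 ≤ x) : 1 ≤ expIter a x := by
  induction a with
  | zero => simpa using hx
  | succ n ih =>
    rw [expIter_succ']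
    exact le_trans ih (Nat.le_of_lt (Nat.lt_two_pow_self))

theorem le_expIter (a x : ℕ) : x ≤ expIter a x := by
  induction a with
  | zero => simp
  | succ n ih => calc x ≤ expIter n x := ih
                  _ ≤ 2 ^ expIter n x := Nat.le_of_lt (Nat.lt_two_pow_self)
                  _ = expIter (n + 1) x := (expIter_succ' n x).symm

theorem two_mul_expIter_le {a x : ℕ} (ha : 1 ≤ a) (hx : 1 ≤ x) :
    2 * expIter a x ≤ expIter a (2 * x) := by
  induction a with
  | zero => omega
  | succ n ih =>
    rcases Nat.eq_zero_or_pos n with rfl | hn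
    · rw [expIter_succ', expIter_succ']
      simp only [expIter_zero]
      calc 2 * 2 ^ x = 2 ^ (x + 1) := by ring
        _ ≤ 2 ^ (2 * x) := Nat.pow_le_pow_right (by norm_num) (by omega)
    · rw [expIter_succ', expIter_succ']
      calc 2 * 2 ^ expIter n x ≤ 2 ^ expIter n x * 2 ^ expIter n x := by
              have : (2:ℕ) ≤ 2 ^ expIter n x := by
                calc (2:ℕ) = 2 ^ 1 := rfl
                  _ ≤ 2 ^ expIter n x := Nat.pow_le_pow_right (by norm_num)
                        (one_le_expIter n hx)
              exact Nat.mul_le_mul_right _ this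
        _ = 2 ^ (2 * expIter n x) := by rw [← Nat.pow_add]; ring_nf
        _ ≤ 2 ^ expIter n (2 * x) := Nat.pow_le_pow_right (by norm_num) (ih hn)

theorem sq_expIter_le {a x : ℕ} (ha : 1 ≤ a) (hx : 1 ≤ x) :
    expIter a x * expIter a x ≤ expIter a (2 * x) := by
  rcases Nat.exists_eq_add_of_le ha with ⟨n, rfl⟩
  induction n with
  | zero =>
    rw [expIter_succ', expIter_succ']
    simp only [expIter_zero]
    rw [← Nat.pow_add]
    exact Nat.pow_le_pow_right (by norm_num) (by omega)
  | succ m ih =>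
    have h1n : 1 ≤ 1 + m := by omega
    rw [show 1 + (m+1) = (1 + m) + 1 by omega, expIter_succ', expIter_succ']
    calc 2 ^ expIter (1+m) x * 2 ^ expIter (1+m) x = 2 ^ (2 * expIter (1+m) x) := by
            rw [← Nat.pow_add]; ring_nf
      _ ≤ 2 ^ expIter (1+m) (2*x) := Nat.pow_le_pow_right (by norm_num)
            (two_mul_expIter_le h1n hx)

theorem tower_lt_tower_succ (a : ℕ) : tower a < tower (a + 1) := by
  show tower a < 2 ^ tower a
  exact Nat.lt_two_pow_self

theorem tower_le_tower {a b : ℕ} (h : a ≤ b) : tower a ≤ tower b := by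
  induction b with
  | zero => simpa [Nat.le_zero.mp h]
  | succ n ih =>
    rcases Nat.lt_or_ge a (n+1) with h' | h'
    · exact le_trans (ih (by omega)) (Nat.le_of_lt (tower_lt_tower_succ n))
    · have : a = n + 1 := by omega
      simp [this]

theorem one_le_tower (a : ℕ) : 1 ≤ tower a := by
  induction a with
  | zero => simp [tower]
  | succ n ih => exact le_trans ih (Nat.le_of_lt (tower_lt_tower_succ n))

/-- Every `n` satisfies `n < tower (logStar n + 1)`. -/
theorem lt_tower_logStar : ∀ n : ℕ, n < tower (logStar n + 1) := by
  intro n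
  induction n using Nat.strong_induction_on with
  | _ n ih =>
    by_cases h : n ≤ 1
    · rw [logStar, dif_pos h]
      show n < tower 1
      simp only [tower]
      omega
    · rw [logStar, dif_neg h]
      have hlog : Nat.log 2 n < n := Nat.log_lt_self 2 (by omega)
      have ihl := ih _ hlog
      have h1 : n < 2 ^ (Nat.log 2 n + 1) := Nat.lt_pow_succ_log_self (by norm_num) n
      have h2 : Nat.log 2 n + 1 ≤ tower (logStar (Nat.log 2 n) + 1) := ihl
      calc n < 2 ^ (Nat.log 2 n + 1) := h1
        _ ≤ 2 ^ tower (logStar (Nat.log 2 n) + 1) := Nat.pow_le_pow_right (by norm_num) h2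
        _ = tower (logStar (Nat.log 2 n) + 1 + 1) := rfl

theorem logStar_pos {n : ℕ} (h : 2 ≤ n) : 1 ≤ logStar n := by
  rw [logStar, dif_neg (by omega)]
  omega

end Aux
namespace Aux
open Fml

/-! ### No sentence of quantifier rank 0 or 1 defines a digraph -/

theorem freeVars_nonempty_of_depth_zero : ∀ φ : Fml, φ.depth = 0 → φ.freeVars.Nonempty
  | .eq a b, _ => ⟨a, by simp [Fml.freeVars]⟩
  | .rel a b, _ => ⟨a, by simp [Fml.freeVars]⟩
  | .not φ, h => freeVars_nonempty_of_depth_zero φ h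
  | .and φ ψ, h => by
      have h1 : φ.depth = 0 := by
        simp only [Fml.depth] at h; omega
      obtain ⟨a, ha⟩ := freeVars_nonempty_of_depth_zero φ h1
      exact ⟨a, by simp [Fml.freeVars, ha]⟩
  | .or φ ψ, h => by
      have h1 : φ.depth = 0 := by
        simp only [Fml.depth] at h; omega
      obtain ⟨a, ha⟩ := freeVars_nonempty_of_depth_zero φ h1
      exact ⟨a, by simp [Fml.freeVars, ha]⟩

theorem vars_eq_freeVars_of_depth_zero : ∀ φ : Fml, φ.depth = 0 → φ.vars = φ.freeVars
  | .eq a b, _ => rfl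
  | .rel a b, _ => rfl
  | .not φ, h => vars_eq_freeVars_of_depth_zero φ h
  | .and φ ψ, h => by
      simp only [Fml.depth] at h
      simp only [Fml.vars, Fml.freeVars,
        vars_eq_freeVars_of_depth_zero φ (by omega),
        vars_eq_freeVars_of_depth_zero ψ (by omega)]
  | .or φ ψ, h => by
      simp only [Fml.depth] at h
      simp only [Fml.vars, Fml.freeVars,
        vars_eq_freeVars_of_depth_zero φ (by omega),
        vars_eq_freeVars_of_depth_zero ψ (by omega)]

/-- A quantifier-free formula all of whose variables lie in `{i}` transfers between any
two points with the same loop status. -/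
theorem eval_qf_single {W W' : Type} (r1 : W → W → Prop) (r2 : W' → W' → Prop) (i : ℕ) :
    ∀ (θ : Fml), θ.depth = 0 → θ.vars ⊆ {i} → ∀ (σ : ℕ → W) (σ' : ℕ → W'),
      (r1 (σ i) (σ i) ↔ r2 (σ' i) (σ' i)) → (θ.eval r1 σ ↔ θ.eval r2 σ')
  | .eq a b, _, hv, σ, σ', _ => by
      have ha : a = i := by
        have := hv (by simp [Fml.vars] : a ∈ (Fml.eq a b).vars); simpa using this
      have hb : b = i := by
        have := hv (by simp [Fml.vars] : b ∈ (Fml.eq a b).vars); simpa using this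
      subst ha; subst hb
      simp [Fml.eval]
  | .rel a b, _, hv, σ, σ', hloop => by
      have ha : a = i := by
        have := hv (by simp [Fml.vars] : a ∈ (Fml.rel a b).vars); simpa using this
      have hb : b = i := by
        have := hv (by simp [Fml.vars] : b ∈ (Fml.rel a b).vars); simpa using this
      subst ha; subst hb
      simpa [Fml.eval] using hloop
  | .not θ, h, hv, σ, σ', hloop => by
      simp only [Fml.eval]
      exact not_congr (eval_qf_single r1 r2 i θ h hv σ σ' hloop)
  | .and θ χ, h, hv, σ, σ', hloop => by
      simp only [Fml.depth] at h
      simp only [Fml.vars] at hv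
      simp only [Fml.eval]
      exact and_congr
        (eval_qf_single r1 r2 i θ (by omega) (fun x hx => hv (by simp [hx])) σ σ' hloop)
        (eval_qf_single r1 r2 i χ (by omega) (fun x hx => hv (by simp [hx])) σ σ' hloop)
  | .or θ χ, h, hv, σ, σ', hloop => by
      simp only [Fml.depth] at h
      simp only [Fml.vars] at hv
      simp only [Fml.eval]
      exact or_congr
        (eval_qf_single r1 r2 i θ (by omega) (fun x hx => hv (by simp [hx])) σ σ' hloop)
        (eval_qf_single r1 r2 i χ (by omega) (fun x hx => hv (by simp [hx])) σ σ' hloop)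

/-- The doubled digraph. -/
def rdouble {V : Type} (r : V → V → Prop) : V ⊕ V → V ⊕ V → Prop :=
  fun a b => r (Sum.elim id id a) (Sum.elim id id b)

theorem depth_one_transfer {V : Type} (r : V → V → Prop) :
    ∀ (φ : Fml), φ.depth ≤ 1 → φ.freeVars = ∅ →
      ∀ (σ : ℕ → V) (σ' : ℕ → V ⊕ V), (φ.eval r σ ↔ φ.eval (rdouble r) σ')
  | .eq a b, _, hfv, _, _ => by
      exfalso
      have : a ∈ (Fml.eq a b).freeVars := by simp [Fml.freeVars]
      rw [hfv] at this
      exact absurd this (Finset.notMem_empty a)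
  | .rel a b, _, hfv, _, _ => by
      exfalso
      have : a ∈ (Fml.rel a b).freeVars := by simp [Fml.freeVars]
      rw [hfv] at this
      exact absurd this (Finset.notMem_empty a)
  | .not φ, h, hfv, σ, σ' => by
      simp only [Fml.eval]
      exact not_congr (depth_one_transfer r φ h hfv σ σ')
  | .and φ ψ, h, hfv, σ, σ' => by
      simp only [Fml.depth] at h
      simp only [Fml.freeVars, Finset.union_eq_empty] at hfv
      simp only [Fml.eval]
      exact and_congr (depth_one_transfer r φ (by omega) hfv.1 σ σ')
        (depth_one_transfer r ψ (by omega) hfv.2 σ σ')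
  | .or φ ψ, h, hfv, σ, σ' => by
      simp only [Fml.depth] at h
      simp only [Fml.freeVars, Finset.union_eq_empty] at hfv
      simp only [Fml.eval]
      exact or_congr (depth_one_transfer r φ (by omega) hfv.1 σ σ')
        (depth_one_transfer r ψ (by omega) hfv.2 σ σ')
  | .all i θ, h, hfv, σ, σ' => by
      have hθ : θ.depth = 0 := by simp only [Fml.depth] at h; omega
      have hsub : θ.freeVars ⊆ {i} := by
        intro x hx
        by_contra hxi
        have : x ∈ (Fml.all i θ).freeVars :=
          Finset.mem_erase.2 ⟨by simpa using hxi, hx⟩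
        rw [hfv] at this
        exact absurd this (Finset.notMem_empty x)
      have hv : θ.vars ⊆ {i} := by
        rw [vars_eq_freeVars_of_depth_zero θ hθ]; exact hsub
      simp only [Fml.eval]
      constructor
      · intro hall w
        have := hall (Sum.elim id id w)
        refine (eval_qf_single r (rdouble r) i θ hθ hv _ _ ?_).mp this
        simp only [Function.update_self, rdouble]
        try rfl
      · intro hall v
        have := hall (Sum.inl v)
        refine (eval_qf_single (rdouble r) r i θ hθ hv _ _ ?_).mp this
        simp only [Function.update_self, rdouble]
        try rfl
  | .ex i θ, h, hfv, σ, σ' => by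
      have hθ : θ.depth = 0 := by simp only [Fml.depth] at h; omega
      have hsub : θ.freeVars ⊆ {i} := by
        intro x hx
        by_contra hxi
        have : x ∈ (Fml.ex i θ).freeVars :=
          Finset.mem_erase.2 ⟨by simpa using hxi, hx⟩
        rw [hfv] at this
        exact absurd this (Finset.notMem_empty x)
      have hv : θ.vars ⊆ {i} := by
        rw [vars_eq_freeVars_of_depth_zero θ hθ]; exact hsub
      simp only [Fml.eval]
      constructor
      · rintro ⟨v, hv'⟩
        refine ⟨Sum.inl v, (eval_qf_single r (rdouble r) i θ hθ hv _ _ ?_).mp hv'⟩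
        simp only [Function.update_self, rdouble]
        try rfl
      · rintro ⟨w, hw⟩
        refine ⟨Sum.elim id id w, (eval_qf_single (rdouble r) r i θ hθ hv _ _ ?_).mp hw⟩
        simp only [Function.update_self, rdouble]
        try rfl

theorem not_diso_double {V : Type} [Fintype V] [Nonempty V] (r : V → V → Prop) :
    ¬ DIso r (rdouble r) := by
  rintro ⟨e, -⟩
  have hcard := Fintype.card_congr e
  rw [Fintype.card_sum] at hcard
  have : Fintype.card V = 0 := by omega
  exact absurd (Fintype.card_pos_iff.mpr ‹Nonempty V›) (by omega)

theorem depth_ge_two_of_defines {V : Type} [Fintype V] [Nonempty V] (r : V → V → Prop)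
    {φ : Fml} (hdef : DDefines r φ) : 2 ≤ φ.depth := by
  by_contra h
  have hd : φ.depth ≤ 1 := by omega
  obtain ⟨hsent, hmod, hother⟩ := hdef
  rcases Nat.eq_zero_or_pos φ.depth with h0 | h1
  · obtain ⟨a, ha⟩ := freeVars_nonempty_of_depth_zero φ h0
    rw [hsent] at ha
    exact absurd ha (Finset.notMem_empty a)
  · refine hother (V ⊕ V) inferInstance inferInstance (rdouble r)
      (not_diso_double r) (fun σ' => ?_)
    have σ₀ : ℕ → V := fun _ => Classical.arbitrary V
    exact (depth_one_transfer r φ hd hsent σ₀ σ').mp (hmod σ₀)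

end Aux
namespace Aux
open Fml

/-! ### The structure of normal formulas -/

/-- Pieces at level `j` of a normal sentence of rank `D`. -/
inductive Piece (D : ℕ) : ℕ → Fml → Prop
  | eqA {a b : ℕ} : a < D → b < D → Piece D D (.eq a b)
  | relA {a b : ℕ} : a < D → b < D → Piece D D (.rel a b)
  | neqA {a b : ℕ} : a < D → b < D → Piece D D (.not (.eq a b))
  | nrelA {a b : ℕ} : a < D → b < D → Piece D D (.not (.rel a b))
  | andP {j : ℕ} {u v : Fml} : Piece D j u → Piece D j v → Piece D j (.and u v)
  | orP {j : ℕ} {u v : Fml} : Piece D j u → Piece D j v → Piece D j (.or u v)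
  | allP {j : ℕ} {u : Fml} : j < D → Piece D (j + 1) u → Piece D j (.all j u)
  | exP {j : ℕ} {u : Fml} : j < D → Piece D (j + 1) u → Piece D j (.ex j u)

theorem normal_piece (D : ℕ) :
    ∀ (u : Fml) (j : ℕ), u.NegAtomic → u.vars ⊆ Finset.range D →
      (∀ t ∈ u.qvseqs, t.map Prod.snd = List.range' j (D - j)) → j ≤ D →
      Piece D j u := by
  intro u
  induction u with
  | eq a b =>
    intro j _ hv hq hj
    have h0 := hq [] rfl
    simp only [List.map_nil] at h0
    have hDj : D - j = 0 := by
      by_contra h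
      rw [show D - j = (D - j - 1) + 1 by omega, List.range'] at h0
      exact absurd h0 (by simp)
    have hjD : j = D := by omega
    have ha : a < D := by simpa using hv (by simp [Fml.vars] : a ∈ (Fml.eq a b).vars)
    have hb : b < D := by simpa using hv (by simp [Fml.vars] : b ∈ (Fml.eq a b).vars)
    rw [hjD]
    exact Piece.eqA ha hb
  | rel a b =>
    intro j _ hv hq hj
    have h0 := hq [] rfl
    simp only [List.map_nil] at h0
    have hDj : D - j = 0 := by
      by_contra h
      rw [show D - j = (D - j - 1) + 1 by omega, List.range'] at h0
      exact absurd h0 (by simp)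
    have hjD : j = D := by omega
    have ha : a < D := by simpa using hv (by simp [Fml.vars] : a ∈ (Fml.rel a b).vars)
    have hb : b < D := by simpa using hv (by simp [Fml.vars] : b ∈ (Fml.rel a b).vars)
    rw [hjD]
    exact Piece.relA ha hb
  | not φ ih =>
    intro j hna hv hq hj
    have hat : φ.IsAtomic := hna
    match φ, hat with
    | .eq a b, _ =>
      have h0 := hq [] rfl
      simp only [List.map_nil] at h0
      have hDj : D - j = 0 := by
        by_contra h
        rw [show D - j = (D - j - 1) + 1 by omega, List.range'] at h0
        exact absurd h0 (by simp)
      have hjD : j = D := by omega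
      have ha : a < D := by
        simpa using hv (by simp [Fml.vars] : a ∈ (Fml.not (Fml.eq a b)).vars)
      have hb : b < D := by
        simpa using hv (by simp [Fml.vars] : b ∈ (Fml.not (Fml.eq a b)).vars)
      rw [hjD]
      exact Piece.neqA ha hb
    | .rel a b, _ =>
      have h0 := hq [] rfl
      simp only [List.map_nil] at h0
      have hDj : D - j = 0 := by
        by_contra h
        rw [show D - j = (D - j - 1) + 1 by omega, List.range'] at h0
        exact absurd h0 (by simp)
      have hjD : j = D := by omega
      have ha : a < D := by
        simpa using hv (by simp [Fml.vars] : a ∈ (Fml.not (Fml.rel a b)).vars)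
      have hb : b < D := by
        simpa using hv (by simp [Fml.vars] : b ∈ (Fml.not (Fml.rel a b)).vars)
      rw [hjD]
      exact Piece.nrelA ha hb
  | and φ ψ ihφ ihψ =>
    intro j hna hv hq hj
    obtain ⟨h1, h2⟩ := hna
    simp only [Fml.vars] at hv
    exact Piece.andP
      (ihφ j h1 (fun x hx => hv (by simp [hx])) (fun t ht => hq t (Or.inl ht)) hj)
      (ihψ j h2 (fun x hx => hv (by simp [hx])) (fun t ht => hq t (Or.inr ht)) hj)
  | or φ ψ ihφ ihψ =>
    intro j hna hv hq hj
    obtain ⟨h1, h2⟩ := hna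
    simp only [Fml.vars] at hv
    exact Piece.orP
      (ihφ j h1 (fun x hx => hv (by simp [hx])) (fun t ht => hq t (Or.inl ht)) hj)
      (ihψ j h2 (fun x hx => hv (by simp [hx])) (fun t ht => hq t (Or.inr ht)) hj)
  | all i φ ih =>
    intro j hna hv hq hj
    obtain ⟨t0, ht0⟩ := qvseqs_nonempty φ
    have h0 := hq ((false, i) :: t0) ⟨t0, ht0, rfl⟩
    have hlt : j < D := by
      by_contra h
      have : D - j = 0 := by omega
      rw [this] at h0
      simp [List.range'] at h0
    rw [show D - j = (D - j - 1) + 1 by omega] at h0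
    simp only [List.map_cons, List.range'] at h0
    have hij : i = j := by exact (List.cons_eq_cons.mp h0).1
    subst hij
    have hφ : ∀ t ∈ φ.qvseqs, t.map Prod.snd = List.range' (i + 1) (D - (i + 1)) := by
      intro t ht
      have := hq ((false, i) :: t) ⟨t, ht, rfl⟩
      rw [show D - i = (D - i - 1) + 1 by omega] at this
      simp only [List.map_cons, List.range'] at this
      have h2 := (List.cons_eq_cons.mp this).2
      rw [h2]
      congr 1
      try omega
    have hvφ : φ.vars ⊆ Finset.range D := by
      intro x hx
      exact hv (by simp [Fml.vars, hx])
    exact Piece.allP hlt (ih (i + 1) hna hvφ hφ (by omega))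
  | ex i φ ih =>
    intro j hna hv hq hj
    obtain ⟨t0, ht0⟩ := qvseqs_nonempty φ
    have h0 := hq ((true, i) :: t0) ⟨t0, ht0, rfl⟩
    have hlt : j < D := by
      by_contra h
      have : D - j = 0 := by omega
      rw [this] at h0
      simp [List.range'] at h0
    rw [show D - j = (D - j - 1) + 1 by omega] at h0
    simp only [List.map_cons, List.range'] at h0
    have hij : i = j := by exact (List.cons_eq_cons.mp h0).1
    subst hij
    have hφ : ∀ t ∈ φ.qvseqs, t.map Prod.snd = List.range' (i + 1) (D - (i + 1)) := by
      intro t ht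
      have := hq ((true, i) :: t) ⟨t, ht, rfl⟩
      rw [show D - i = (D - i - 1) + 1 by omega] at this
      simp only [List.map_cons, List.range'] at this
      have h2 := (List.cons_eq_cons.mp this).2
      rw [h2]
      congr 1
      try omega
    have hvφ : φ.vars ⊆ Finset.range D := by
      intro x hx
      exact hv (by simp [Fml.vars, hx])
    exact Piece.exP hlt (ih (i + 1) hna hvφ hφ (by omega))

end Aux
namespace Aux
open Fml

attribute [local instance] Classical.propDecidable

theorem freeVars_subset_vars : ∀ φ : Fml, φ.freeVars ⊆ φ.vars
  | .eq a b => by simp [Fml.freeVars, Fml.vars]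
  | .rel a b => by simp [Fml.freeVars, Fml.vars]
  | .not φ => freeVars_subset_vars φ
  | .and φ ψ => by
      simp only [Fml.freeVars, Fml.vars]
      exact Finset.union_subset_union (freeVars_subset_vars φ) (freeVars_subset_vars ψ)
  | .or φ ψ => by
      simp only [Fml.freeVars, Fml.vars]
      exact Finset.union_subset_union (freeVars_subset_vars φ) (freeVars_subset_vars ψ)
  | .all i φ => by
      simp only [Fml.freeVars, Fml.vars]
      exact subset_trans (Finset.erase_subset i _)
        (subset_trans (freeVars_subset_vars φ) (Finset.subset_insert i _))
  | .ex i φ => by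
      simp only [Fml.freeVars, Fml.vars]
      exact subset_trans (Finset.erase_subset i _)
        (subset_trans (freeVars_subset_vars φ) (Finset.subset_insert i _))

section Desc

variable {V : Type} [Fintype V] [Nonempty V]

/-- The complete description of the atomic data of `σ` on the variables `< D`. -/
noncomputable def atomDesc (r : V → V → Prop) (D : ℕ) (σ : ℕ → V) : Fml :=
  bigAnd ((List.range (D * D)).map fun k =>
    .and (if σ (k / D) = σ (k % D) then .eq (k / D) (k % D)
          else .not (.eq (k / D) (k % D)))
         (if r (σ (k / D)) (σ (k % D)) then .rel (k / D) (k % D)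
          else .not (.rel (k / D) (k % D))))

/-- Canonical generators for atomic descriptions. -/
noncomputable def atomGen (D : ℕ) (fg : (Fin D → Fin D) × (Fin D → Fin D → Bool)) : Fml :=
  bigAnd ((List.range (D * D)).map fun k =>
    .and (if (∃ (h : k / D < D ∧ k % D < D), fg.1 ⟨k / D, h.1⟩ = fg.1 ⟨k % D, h.2⟩)
            then .eq (k / D) (k % D) else .not (.eq (k / D) (k % D)))
         (if (∃ (h : k / D < D ∧ k % D < D), fg.2 ⟨k / D, h.1⟩ ⟨k % D, h.2⟩ = true)
            then .rel (k / D) (k % D) else .not (.rel (k / D) (k % D))))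

variable (r : V → V → Prop) (D : ℕ)

theorem eval_atomDesc_self (σ : ℕ → V) : (atomDesc r D σ).eval r σ := by
  rw [atomDesc, eval_bigAnd]
  intro φ hφ
  simp only [List.mem_map, List.mem_range] at hφ
  obtain ⟨k, -, rfl⟩ := hφ
  constructor
  · split <;> simp_all [Fml.eval]
  · split <;> simp_all [Fml.eval]

theorem atomDesc_transfer {W : Type} (r' : W → W → Prop) (σ : ℕ → V) (σ' : ℕ → W)
    (hev : (atomDesc r D σ).eval r' σ') {a b : ℕ} (ha : a < D) (hb : b < D) :
    (σ a = σ b ↔ σ' a = σ' b) ∧ (r (σ a) (σ b) ↔ r' (σ' a) (σ' b)) := by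
  rw [atomDesc, eval_bigAnd] at hev
  have hk : b + a * D < D * D := by
    have h1 : a + 1 ≤ D := ha
    calc b + a * D < D + a * D := by omega
      _ = (a + 1) * D := by ring
      _ ≤ D * D := Nat.mul_le_mul_right D h1
  have hdiv : (b + a * D) / D = a := by
    rw [Nat.add_mul_div_right _ _ (by omega : 0 < D), Nat.div_eq_of_lt hb]
    omega
  have hmod : (b + a * D) % D = b := by
    rw [Nat.add_mul_mod_self_right, Nat.mod_eq_of_lt hb]
  have := hev _ (List.mem_map.mpr ⟨b + a * D, List.mem_range.mpr hk, rfl⟩)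
  rw [hdiv, hmod] at this
  obtain ⟨h1, h2⟩ := this
  constructor
  · by_cases h : σ a = σ b
    · rw [if_pos h] at h1
      simpa [Fml.eval, h] using h1
    · rw [if_neg h] at h1
      simp only [Fml.eval] at h1
      simp [h, h1]
  · by_cases h : r (σ a) (σ b)
    · rw [if_pos h] at h2
      simpa [Fml.eval, h] using h2
    · rw [if_neg h] at h2
      simp only [Fml.eval] at h2
      simp [h, h2]

theorem len_atomDesc (σ : ℕ → V) : (atomDesc r D σ).len ≤ 3 + (D * D) * 10 := by
  rw [atomDesc]
  have := len_bigAnd 9 ((List.range (D * D)).map fun k =>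
    Fml.and (if σ (k / D) = σ (k % D) then .eq (k / D) (k % D)
          else .not (.eq (k / D) (k % D)))
         (if r (σ (k / D)) (σ (k % D)) then .rel (k / D) (k % D)
          else .not (.rel (k / D) (k % D)))) ?_
  · simpa using this
  · intro φ hφ
    simp only [List.mem_map, List.mem_range] at hφ
    obtain ⟨k, -, rfl⟩ := hφ
    simp only [Fml.len]
    split <;> split <;> simp [Fml.len]

theorem depth_atomDesc (hD : 0 < D) (σ : ℕ → V) : (atomDesc r D σ).depth = 0 := by
  rw [atomDesc]
  apply depth_bigAnd
  · simp only [ne_eq, List.map_eq_nil_iff, List.range_eq_nil]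
    positivity
  · intro φ hφ
    simp only [List.mem_map, List.mem_range] at hφ
    obtain ⟨k, -, rfl⟩ := hφ
    simp only [Fml.depth]
    split <;> split <;> simp [Fml.depth]

theorem negAtomic_atomDesc (σ : ℕ → V) : (atomDesc r D σ).NegAtomic := by
  rw [atomDesc]
  apply negAtomic_bigAnd
  intro φ hφ
  simp only [List.mem_map, List.mem_range] at hφ
  obtain ⟨k, -, rfl⟩ := hφ
  constructor
  · split <;> trivial
  · split <;> trivial

theorem qstrings_atomDesc (σ : ℕ → V) (S : Set (List Bool)) (h0 : [] ∈ S) :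
    (atomDesc r D σ).qstrings ⊆ S := by
  rw [atomDesc]
  apply qstrings_bigAnd _ _ h0
  intro φ hφ
  simp only [List.mem_map, List.mem_range] at hφ
  obtain ⟨k, -, rfl⟩ := hφ
  intro t ht
  rcases ht with ht | ht <;>
  · revert ht
    split <;> simp only [Fml.qstrings, Set.mem_singleton_iff] <;> rintro rfl <;> exact h0

theorem qvseqs_atomDesc (σ : ℕ → V) (S : Set (List (Bool × ℕ))) (h0 : [] ∈ S) :
    (atomDesc r D σ).qvseqs ⊆ S := by
  rw [atomDesc]
  apply qvseqs_bigAnd _ _ h0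
  intro φ hφ
  simp only [List.mem_map, List.mem_range] at hφ
  obtain ⟨k, -, rfl⟩ := hφ
  intro t ht
  rcases ht with ht | ht <;>
  · revert ht
    split <;> simp only [Fml.qvseqs, Set.mem_singleton_iff] <;> rintro rfl <;> exact h0

theorem vars_atomDesc (hD : 0 < D) (σ : ℕ → V) :
    (atomDesc r D σ).vars ⊆ Finset.range D := by
  rw [atomDesc]
  apply vars_bigAnd _ _ (by simpa using hD)
  intro φ hφ
  simp only [List.mem_map, List.mem_range] at hφ
  obtain ⟨k, hk, rfl⟩ := hφ
  have h1 : k / D < D := Nat.div_lt_of_lt_mul (by omega)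
  have h2 : k % D < D := Nat.mod_lt _ hD
  simp only [Fml.vars]
  apply Finset.union_subset <;>
  · split <;> simp [Fml.vars] <;> intro x hx <;> simp at hx <;> rcases hx with rfl | rfl <;>
      simpa using ‹_›

theorem atomDesc_mem_image (σ : ℕ → V) :
    atomDesc r D σ ∈ Finset.image (atomGen D) Finset.univ := by
  classical
  have hne : ∀ i : Fin D, (Finset.univ.filter fun j : Fin D => σ j.val = σ i.val).Nonempty :=
    fun i => ⟨i, by simp⟩
  set f : Fin D → Fin D := fun i =>
    (Finset.univ.filter fun j : Fin D => σ j.val = σ i.val).min' (hne i) with hf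
  set g : Fin D → Fin D → Bool := fun i j => if r (σ i.val) (σ j.val) then true else false
    with hg
  have hfmem : ∀ i : Fin D, σ (f i).val = σ i.val := by
    intro i
    have := Finset.min'_mem _ (hne i)
    simpa using this
  have hfiff : ∀ i j : Fin D, σ i.val = σ j.val ↔ f i = f j := by
    intro i j
    constructor
    · intro hij
      have : (Finset.univ.filter fun k : Fin D => σ k.val = σ i.val) =
          (Finset.univ.filter fun k : Fin D => σ k.val = σ j.val) := by
        apply Finset.filter_congr
        intro k _
        simp [hij]
      simp only [hf]
      congr 1
    · intro hij
      calc σ i.val = σ (f i).val := (hfmem i).symm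
        _ = σ (f j).val := by rw [hij]
        _ = σ j.val := hfmem j
  refine Finset.mem_image.mpr ⟨(f, g), Finset.mem_univ _, ?_⟩
  rw [atomGen, atomDesc]
  congr 1
  apply List.map_congr_left
  intro k hk
  rw [List.mem_range] at hk
  have hD : 0 < D := by
    rcases Nat.eq_zero_or_pos D with rfl | h
    · simp at hk
    · exact h
  have h1 : k / D < D := Nat.div_lt_of_lt_mul (by omega)
  have h2 : k % D < D := Nat.mod_lt _ hD
  congr 1
  · apply if_congr _ rfl rfl
    constructor
    · rintro ⟨h, hfg⟩
      exact (hfiff ⟨k / D, h.1⟩ ⟨k % D, h.2⟩).mpr hfg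
    · intro h
      exact ⟨⟨h1, h2⟩, (hfiff ⟨k / D, h1⟩ ⟨k % D, h2⟩).mp h⟩
  · apply if_congr _ rfl rfl
    constructor
    · rintro ⟨h, hfg⟩
      simp only [hg] at hfg
      by_contra hr
      rw [if_neg hr] at hfg
      exact Bool.false_ne_true hfg
    · intro h
      exact ⟨⟨h1, h2⟩, by simp [hg, h]⟩

theorem card_atomGen :
    (Finset.image (atomGen D) Finset.univ).card ≤ D ^ D * 2 ^ (D * D) := by
  calc (Finset.image (atomGen D) Finset.univ).card ≤ (Finset.univ :
        Finset ((Fin D → Fin D) × (Fin D → Fin D → Bool))).card :=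
        Finset.card_image_le
    _ = D ^ D * 2 ^ (D * D) := by
        simp [Fintype.card_fun, Fintype.card_prod]
        rw [← pow_mul]

end Desc
end Aux
namespace Aux
open Fml

attribute [local instance] Classical.propDecidable

section Desc2

variable {V : Type} [Fintype V] [Nonempty V]

noncomputable def exPartOf (j : ℕ) (S : Finset Fml) : Fml :=
  bigAnd (S.toList.map (Fml.ex j))

noncomputable def faPartOf (j : ℕ) (S : Finset Fml) : Fml :=
  .all j (bigOr S.toList)

/-- The description of `(V, r, σ)` at pattern tree `q`, `m` quantifier levels remaining
(current quantifier level is `D - m`). -/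
noncomputable def desc (r : V → V → Prop) (D : ℕ) : ℕ → Set (List Bool) → (ℕ → V) → Fml
  | 0, _, σ => atomDesc r D σ
  | m + 1, q, σ =>
    if {t : List Bool | true :: t ∈ q}.Nonempty then
      if {t : List Bool | false :: t ∈ q}.Nonempty then
        .and
          (exPartOf (D - (m + 1)) ((Finset.univ : Finset V).image fun v =>
            desc r D m {t | true :: t ∈ q} (Function.update σ (D - (m + 1)) v)))
          (faPartOf (D - (m + 1)) ((Finset.univ : Finset V).image fun v =>
            desc r D m {t | false :: t ∈ q} (Function.update σ (D - (m + 1)) v)))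
      else
        exPartOf (D - (m + 1)) ((Finset.univ : Finset V).image fun v =>
          desc r D m {t | true :: t ∈ q} (Function.update σ (D - (m + 1)) v))
    else
      faPartOf (D - (m + 1)) ((Finset.univ : Finset V).image fun v =>
        desc r D m {t | false :: t ∈ q} (Function.update σ (D - (m + 1)) v))

variable (r : V → V → Prop) (D : ℕ)

theorem eval_exPartOf {W : Type} (r' : W → W → Prop) (σ' : ℕ → W) (j : ℕ) (S : Finset Fml) :
    (exPartOf j S).eval r' σ' ↔ ∀ χ ∈ S, ∃ w : W, χ.eval r' (Function.update σ' j w) := by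
  rw [exPartOf, eval_bigAnd]
  constructor
  · intro h χ hχ
    exact h (.ex j χ) (List.mem_map.mpr ⟨χ, Finset.mem_toList.mpr hχ, rfl⟩)
  · intro h φ hφ
    obtain ⟨χ, hχ, rfl⟩ := List.mem_map.mp hφ
    exact h χ (Finset.mem_toList.mp hχ)

theorem eval_faPartOf {W : Type} (r' : W → W → Prop) (σ' : ℕ → W) (j : ℕ) (S : Finset Fml) :
    (faPartOf j S).eval r' σ' ↔ ∀ w : W, ∃ χ ∈ S, χ.eval r' (Function.update σ' j w) := by
  rw [faPartOf]
  show (∀ w : W, _) ↔ _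
  refine forall_congr' fun w => ?_
  rw [eval_bigOr]
  constructor
  · rintro ⟨χ, hχ, h⟩
    exact ⟨χ, Finset.mem_toList.mp hχ, h⟩
  · rintro ⟨χ, hχ, h⟩
    exact ⟨χ, Finset.mem_toList.mpr hχ, h⟩

/-- The description is true of its own data. -/
theorem desc_self : ∀ (m : ℕ) (q : Set (List Bool)) (σ : ℕ → V),
    (desc r D m q σ).eval r σ := by
  intro m
  induction m with
  | zero => intro q σ; exact eval_atomDesc_self r D σ
  | succ m ih =>
    intro q σ
    have hex : (exPartOf (D - (m + 1)) ((Finset.univ : Finset V).image fun v =>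
        desc r D m {t | true :: t ∈ q} (Function.update σ (D - (m + 1)) v))).eval r σ := by
      rw [eval_exPartOf]
      intro χ hχ
      obtain ⟨v, -, rfl⟩ := Finset.mem_image.mp hχ
      exact ⟨v, ih _ _⟩
    have hfa : (faPartOf (D - (m + 1)) ((Finset.univ : Finset V).image fun v =>
        desc r D m {t | false :: t ∈ q} (Function.update σ (D - (m + 1)) v))).eval r σ := by
      rw [eval_faPartOf]
      intro w
      exact ⟨desc r D m {t | false :: t ∈ q} (Function.update σ (D - (m + 1)) w),
        Finset.mem_image.mpr ⟨w, Finset.mem_univ w, rfl⟩, ih _ _⟩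
    rw [desc]
    split
    · split
      · exact ⟨hex, hfa⟩
      · exact hex
    · exact hfa

/-- Key transfer lemma: if a structure satisfies the description of `(V, r, σV)`, then
every piece with quantifier strings inside the pattern tree that holds in `V` also
holds there. -/
theorem desc_transfer {W : Type} (r' : W → W → Prop) :
    ∀ {j : ℕ} {u : Fml}, Piece D j u →
      ∀ (q : Set (List Bool)) (σV : ℕ → V) (σW : ℕ → W), u.qstrings ⊆ q →
        (desc r D (D - j) q σV).eval r' σW → u.eval r σV → u.eval r' σW := by
  intro j u hp
  induction hp with
  | eqA ha hb =>
    intro q σV σW _ hev hu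
    rw [Nat.sub_self] at hev
    exact ((atomDesc_transfer r D r' σV σW hev ha hb).1).mp hu
  | relA ha hb =>
    intro q σV σW _ hev hu
    rw [Nat.sub_self] at hev
    exact ((atomDesc_transfer r D r' σV σW hev ha hb).2).mp hu
  | neqA ha hb =>
    intro q σV σW _ hev hu
    rw [Nat.sub_self] at hev
    exact fun h => hu (((atomDesc_transfer r D r' σV σW hev ha hb).1).mpr h)
  | nrelA ha hb =>
    intro q σV σW _ hev hu
    rw [Nat.sub_self] at hev
    exact fun h => hu (((atomDesc_transfer r D r' σV σW hev ha hb).2).mpr h)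
  | andP h1 h2 ih1 ih2 =>
    intro q σV σW hq hev hu
    exact ⟨ih1 q σV σW (fun t ht => hq (Or.inl ht)) hev hu.1,
           ih2 q σV σW (fun t ht => hq (Or.inr ht)) hev hu.2⟩
  | orP h1 h2 ih1 ih2 =>
    intro q σV σW hq hev hu
    rcases hu with hu | hu
    · exact Or.inl (ih1 q σV σW (fun t ht => hq (Or.inl ht)) hev hu)
    · exact Or.inr (ih2 q σV σW (fun t ht => hq (Or.inr ht)) hev hu)
  | @allP j u hj hu ih =>
    intro q σV σW hq hev hvV
    have hm : D - j = (D - (j + 1)) + 1 := by omega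
    rw [hm] at hev
    rw [desc] at hev
    have hqsub : u.qstrings ⊆ {t | false :: t ∈ q} := by
      intro t ht
      exact hq ⟨t, ht, rfl⟩
    have hfa : {t : List Bool | false :: t ∈ q}.Nonempty := by
      obtain ⟨t, ht⟩ := qstrings_nonempty u
      exact ⟨t, hqsub ht⟩
    have hj' : D - (j + 1) + 1 = D - j := hm.symm
    have heva : (faPartOf (D - (D - (j+1) + 1)) ((Finset.univ : Finset V).image fun v =>
        desc r D (D - (j+1)) {t | false :: t ∈ q}
          (Function.update σV (D - (D - (j+1) + 1)) v))).eval r' σW := by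
      by_cases h1 : {t : List Bool | true :: t ∈ q}.Nonempty
      · rw [if_pos h1, if_pos hfa] at hev
        simp only [Fml.eval] at hev
        exact hev.2
      · rw [if_neg h1] at hev
        exact hev
    have hDj : D - (D - (j+1) + 1) = j := by omega
    rw [hDj] at heva
    rw [eval_faPartOf] at heva
    intro w
    obtain ⟨χ, hχ, hevχ⟩ := heva w
    obtain ⟨v, -, rfl⟩ := Finset.mem_image.mp hχ
    exact ih {t | false :: t ∈ q} (Function.update σV j v) (Function.update σW j w)
      hqsub hevχ (hvV v)
  | @exP j u hj hu ih =>
    intro q σV σW hq hev hvV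
    have hm : D - j = (D - (j + 1)) + 1 := by omega
    rw [hm] at hev
    rw [desc] at hev
    have hqsub : u.qstrings ⊆ {t | true :: t ∈ q} := by
      intro t ht
      exact hq ⟨t, ht, rfl⟩
    have hexne : {t : List Bool | true :: t ∈ q}.Nonempty := by
      obtain ⟨t, ht⟩ := qstrings_nonempty u
      exact ⟨t, hqsub ht⟩
    have heva : (exPartOf (D - (D - (j+1) + 1)) ((Finset.univ : Finset V).image fun v =>
        desc r D (D - (j+1)) {t | true :: t ∈ q}
          (Function.update σV (D - (D - (j+1) + 1)) v))).eval r' σW := by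
      rw [if_pos hexne] at hev
      by_cases h2 : {t : List Bool | false :: t ∈ q}.Nonempty
      · rw [if_pos h2] at hev
        simp only [Fml.eval] at hev
        exact hev.1
      · rw [if_neg h2] at hev
        exact hev
    have hDj : D - (D - (j+1) + 1) = j := by omega
    rw [hDj] at heva
    rw [eval_exPartOf] at heva
    obtain ⟨v, hv⟩ := hvV
    obtain ⟨w, hw⟩ := heva (desc r D (D - (j+1)) {t | true :: t ∈ q}
        (Function.update σV j v)) (Finset.mem_image.mpr ⟨v, Finset.mem_univ v, rfl⟩)
    exact ⟨w, ih {t | true :: t ∈ q} (Function.update σV j v) (Function.update σW j w)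
      hqsub hw hv⟩

end Desc2
end Aux
namespace Aux
open Fml

attribute [local instance] Classical.propDecidable

/-! nonempty-list versions of the qstring/qvseq lemmas -/

theorem qstrings_bigAnd' (S : Set (List Bool)) : ∀ L : List Fml, L ≠ [] →
    (∀ φ ∈ L, φ.qstrings ⊆ S) → (bigAnd L).qstrings ⊆ S
  | [], h, _ => absurd rfl h
  | [φ], _, h => h φ (by simp)
  | φ :: ψ :: l, _, h => by
      intro t ht
      rcases ht with ht | ht
      · exact h φ (by simp) ht
      · exact qstrings_bigAnd' S (ψ :: l) (by simp) (fun χ hχ => h χ (by simp [hχ])) ht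

theorem qstrings_bigOr' (S : Set (List Bool)) : ∀ L : List Fml, L ≠ [] →
    (∀ φ ∈ L, φ.qstrings ⊆ S) → (bigOr L).qstrings ⊆ S
  | [], h, _ => absurd rfl h
  | [φ], _, h => h φ (by simp)
  | φ :: ψ :: l, _, h => by
      intro t ht
      rcases ht with ht | ht
      · exact h φ (by simp) ht
      · exact qstrings_bigOr' S (ψ :: l) (by simp) (fun χ hχ => h χ (by simp [hχ])) ht

theorem qvseqs_bigAnd' (S : Set (List (Bool × ℕ))) : ∀ L : List Fml, L ≠ [] →
    (∀ φ ∈ L, φ.qvseqs ⊆ S) → (bigAnd L).qvseqs ⊆ S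
  | [], h, _ => absurd rfl h
  | [φ], _, h => h φ (by simp)
  | φ :: ψ :: l, _, h => by
      intro t ht
      rcases ht with ht | ht
      · exact h φ (by simp) ht
      · exact qvseqs_bigAnd' S (ψ :: l) (by simp) (fun χ hχ => h χ (by simp [hχ])) ht

theorem qvseqs_bigOr' (S : Set (List (Bool × ℕ))) : ∀ L : List Fml, L ≠ [] →
    (∀ φ ∈ L, φ.qvseqs ⊆ S) → (bigOr L).qvseqs ⊆ S
  | [], h, _ => absurd rfl h
  | [φ], _, h => h φ (by simp)
  | φ :: ψ :: l, _, h => by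
      intro t ht
      rcases ht with ht | ht
      · exact h φ (by simp) ht
      · exact qvseqs_bigOr' S (ψ :: l) (by simp) (fun χ hχ => h χ (by simp [hχ])) ht

section Desc3

variable {V : Type} [Fintype V] [Nonempty V]

theorem image_toList_ne_nil {α : Type*} (f : V → α) [DecidableEq α] :
    ((Finset.univ : Finset V).image f).toList ≠ [] :=
  Finset.Nonempty.toList_ne_nil ((Finset.univ_nonempty).image f)

theorem image_toList_map_ne_nil {α β : Type*} (f : V → α) (g : α → β) [DecidableEq α] :
    (((Finset.univ : Finset V).image f).toList.map g) ≠ [] := by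
  simp only [ne_eq, List.map_eq_nil_iff]
  exact image_toList_ne_nil f

/-- Pattern-tree invariant: nonempty, and all strings have length `m`. -/
def Inv (m : ℕ) (q : Set (List Bool)) : Prop :=
  q.Nonempty ∧ ∀ t ∈ q, t.length = m

theorem inv_child_true {m : ℕ} {q : Set (List Bool)} (h : Inv (m + 1) q)
    (hne : {t : List Bool | true :: t ∈ q}.Nonempty) : Inv m {t | true :: t ∈ q} := by
  refine ⟨hne, ?_⟩
  intro t ht
  have := h.2 _ ht
  simpa using this

theorem inv_child_false {m : ℕ} {q : Set (List Bool)} (h : Inv (m + 1) q)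
    (hne : {t : List Bool | false :: t ∈ q}.Nonempty) : Inv m {t | false :: t ∈ q} := by
  refine ⟨hne, ?_⟩
  intro t ht
  have := h.2 _ ht
  simpa using this

theorem inv_child_or {m : ℕ} {q : Set (List Bool)} (h : Inv (m + 1) q) :
    {t : List Bool | true :: t ∈ q}.Nonempty ∨ {t : List Bool | false :: t ∈ q}.Nonempty := by
  obtain ⟨t0, ht0⟩ := h.1
  have hl := h.2 t0 ht0
  match t0, hl with
  | b :: t, _ =>
    cases b
    · exact Or.inr ⟨t, ht0⟩
    · exact Or.inl ⟨t, ht0⟩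

variable (r : V → V → Prop) (D : ℕ)

theorem negAtomic_desc : ∀ (m : ℕ) (q : Set (List Bool)) (σ : ℕ → V),
    (desc r D m q σ).NegAtomic := by
  intro m
  induction m with
  | zero => intro q σ; exact negAtomic_atomDesc r D σ
  | succ m ih =>
    intro q σ
    have hex : ∀ (q' : Set (List Bool)),
        (exPartOf (D - (m + 1)) ((Finset.univ : Finset V).image fun v =>
          desc r D m q' (Function.update σ (D - (m + 1)) v))).NegAtomic := by
      intro q'
      apply negAtomic_bigAnd
      intro φ hφ
      obtain ⟨χ, hχ, rfl⟩ := List.mem_map.mp hφ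
      obtain ⟨v, -, rfl⟩ := Finset.mem_image.mp (Finset.mem_toList.mp hχ)
      exact ih _ _
    have hfa : ∀ (q' : Set (List Bool)),
        (faPartOf (D - (m + 1)) ((Finset.univ : Finset V).image fun v =>
          desc r D m q' (Function.update σ (D - (m + 1)) v))).NegAtomic := by
      intro q'
      show Fml.NegAtomic _
      apply negAtomic_bigOr
      intro φ hφ
      obtain ⟨v, -, rfl⟩ := Finset.mem_image.mp (Finset.mem_toList.mp hφ)
      exact ih _ _
    rw [desc]
    split
    · split
      · exact ⟨hex _, hfa _⟩
      · exact hex _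
    · exact hfa _

theorem vars_desc (hD : 0 < D) : ∀ (m : ℕ) (q : Set (List Bool)) (σ : ℕ → V),
    (desc r D m q σ).vars ⊆ Finset.range D := by
  intro m
  induction m with
  | zero => intro q σ; exact vars_atomDesc r D hD σ
  | succ m ih =>
    intro q σ
    have hj : D - (m + 1) < D := by omega
    have hex : ∀ (q' : Set (List Bool)),
        (exPartOf (D - (m + 1)) ((Finset.univ : Finset V).image fun v =>
          desc r D m q' (Function.update σ (D - (m + 1)) v))).vars ⊆ Finset.range D := by
      intro q'
      apply vars_bigAnd _ _ (by simpa using hD)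
      intro φ hφ
      obtain ⟨χ, hχ, rfl⟩ := List.mem_map.mp hφ
      obtain ⟨v, -, rfl⟩ := Finset.mem_image.mp (Finset.mem_toList.mp hχ)
      simp only [Fml.vars]
      apply Finset.insert_subset (by simpa using hj)
      exact ih _ _
    have hfa : ∀ (q' : Set (List Bool)),
        (faPartOf (D - (m + 1)) ((Finset.univ : Finset V).image fun v =>
          desc r D m q' (Function.update σ (D - (m + 1)) v))).vars ⊆ Finset.range D := by
      intro q'
      show Fml.vars _ ⊆ _
      simp only [faPartOf, Fml.vars]
      apply Finset.insert_subset (by simpa using hj)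
      apply vars_bigOr _ _ (by simpa using hD)
      intro φ hφ
      obtain ⟨v, -, rfl⟩ := Finset.mem_image.mp (Finset.mem_toList.mp hφ)
      exact ih _ _
    rw [desc]
    split
    · split
      · simp only [Fml.vars]
        exact Finset.union_subset (hex _) (hfa _)
      · exact hex _
    · exact hfa _

theorem freeVars_desc (hD : 0 < D) : ∀ (m : ℕ), m ≤ D → ∀ (q : Set (List Bool)) (σ : ℕ → V),
    (desc r D m q σ).freeVars ⊆ Finset.range (D - m) := by
  intro m
  induction m with
  | zero =>
    intro _ q σ
    rw [Nat.sub_zero]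
    exact subset_trans (freeVars_subset_vars _) (vars_atomDesc r D hD σ)
  | succ m ih =>
    intro hmD q σ
    have harith : D - m = (D - (m + 1)) + 1 := by omega
    have hrange : Finset.range (D - m) = insert (D - (m + 1)) (Finset.range (D - (m + 1))) := by
      rw [harith, Finset.range_add_one]
    have hex : ∀ (q' : Set (List Bool)),
        (exPartOf (D - (m + 1)) ((Finset.univ : Finset V).image fun v =>
          desc r D m q' (Function.update σ (D - (m + 1)) v))).freeVars ⊆
          Finset.range (D - (m + 1)) := by
      intro q'
      apply freeVars_bigAnd _ _ (image_toList_map_ne_nil _ _)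
      intro φ hφ
      obtain ⟨χ, hχ, rfl⟩ := List.mem_map.mp hφ
      obtain ⟨v, -, rfl⟩ := Finset.mem_image.mp (Finset.mem_toList.mp hχ)
      show (Fml.freeVars _).erase _ ⊆ _
      intro x hx
      obtain ⟨hx1, hx2⟩ := Finset.mem_erase.mp hx
      have := ih (by omega) q' (Function.update σ (D - (m + 1)) v) hx2
      rw [hrange] at this
      rcases Finset.mem_insert.mp this with rfl | h
      · exact absurd rfl hx1
      · exact h
    have hfa : ∀ (q' : Set (List Bool)),
        (faPartOf (D - (m + 1)) ((Finset.univ : Finset V).image fun v =>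
          desc r D m q' (Function.update σ (D - (m + 1)) v))).freeVars ⊆
          Finset.range (D - (m + 1)) := by
      intro q'
      show (Fml.freeVars _).erase _ ⊆ _
      intro x hx
      obtain ⟨hx1, hx2⟩ := Finset.mem_erase.mp hx
      have hsub : (bigOr ((Finset.univ : Finset V).image fun v =>
          desc r D m q' (Function.update σ (D - (m + 1)) v)).toList).freeVars ⊆
          Finset.range (D - m) := by
        apply freeVars_bigOr _ _ (image_toList_ne_nil _)
        intro φ hφ
        obtain ⟨v, -, rfl⟩ := Finset.mem_image.mp (Finset.mem_toList.mp hφ)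
        exact ih (by omega) q' _
      have := hsub hx2
      rw [hrange] at this
      rcases Finset.mem_insert.mp this with rfl | h
      · exact absurd rfl hx1
      · exact h
    rw [desc]
    split
    · split
      · show (Fml.freeVars _ ∪ Fml.freeVars _) ⊆ _
        exact Finset.union_subset (hex _) (hfa _)
      · exact hex _
    · exact hfa _

theorem depth_desc (hD : 0 < D) : ∀ (m : ℕ) (q : Set (List Bool)), Inv m q → ∀ (σ : ℕ → V),
    (desc r D m q σ).depth = m := by
  intro m
  induction m with
  | zero => intro q _ σ; exact depth_atomDesc r D hD σ
  | succ m ih =>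
    intro q hinv σ
    have hex : ∀ (q' : Set (List Bool)), Inv m q' →
        (exPartOf (D - (m + 1)) ((Finset.univ : Finset V).image fun v =>
          desc r D m q' (Function.update σ (D - (m + 1)) v))).depth = m + 1 := by
      intro q' hinv'
      apply depth_bigAnd
      · exact image_toList_map_ne_nil _ _
      · intro φ hφ
        obtain ⟨χ, hχ, rfl⟩ := List.mem_map.mp hφ
        obtain ⟨v, -, rfl⟩ := Finset.mem_image.mp (Finset.mem_toList.mp hχ)
        show Fml.depth _ + 1 = m + 1
        rw [ih _ hinv']
    have hfa : ∀ (q' : Set (List Bool)), Inv m q' →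
        (faPartOf (D - (m + 1)) ((Finset.univ : Finset V).image fun v =>
          desc r D m q' (Function.update σ (D - (m + 1)) v))).depth = m + 1 := by
      intro q' hinv'
      show Fml.depth _ + 1 = m + 1
      congr 1
      apply depth_bigOr
      · exact image_toList_ne_nil _
      · intro φ hφ
        obtain ⟨v, -, rfl⟩ := Finset.mem_image.mp (Finset.mem_toList.mp hφ)
        exact ih _ hinv' _
    rw [desc]
    rcases inv_child_or hinv with h1 | h2
    · rw [if_pos h1]
      by_cases h2 : {t : List Bool | false :: t ∈ q}.Nonempty
      · rw [if_pos h2]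
        show max _ _ = m + 1
        rw [hex _ (inv_child_true hinv h1), hfa _ (inv_child_false hinv h2)]
        simp
      · rw [if_neg h2]
        exact hex _ (inv_child_true hinv h1)
    · by_cases h1 : {t : List Bool | true :: t ∈ q}.Nonempty
      · rw [if_pos h1]
        by_cases h2' : {t : List Bool | false :: t ∈ q}.Nonempty
        · rw [if_pos h2']
          show max _ _ = m + 1
          rw [hex _ (inv_child_true hinv h1), hfa _ (inv_child_false hinv h2')]
          simp
        · rw [if_neg h2']
          exact hex _ (inv_child_true hinv h1)
      · rw [if_neg h1]
        exact hfa _ (inv_child_false hinv h2)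

theorem qvseqs_desc : ∀ (m : ℕ), m ≤ D → ∀ (q : Set (List Bool)), Inv m q → ∀ (σ : ℕ → V),
    ∀ t ∈ (desc r D m q σ).qvseqs, t.map Prod.snd = List.range' (D - m) m := by
  intro m
  induction m with
  | zero =>
    intro _ q _ σ t ht
    have := qvseqs_atomDesc r D σ {([] : List (Bool × ℕ))} rfl ht
    simp only [Set.mem_singleton_iff] at this
    simp [this]
  | succ m ih =>
    intro hmD q hinv σ
    have harith : D - m = (D - (m + 1)) + 1 := by omega
    have hr : List.range' (D - (m + 1)) (m + 1) =
        (D - (m + 1)) :: List.range' (D - m) m := by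
      rw [List.range', show D - (m + 1) + 1 = D - m from by omega]
    have hex : ∀ (q' : Set (List Bool)), Inv m q' → ∀ t ∈
        (exPartOf (D - (m + 1)) ((Finset.univ : Finset V).image fun v =>
          desc r D m q' (Function.update σ (D - (m + 1)) v))).qvseqs,
          t.map Prod.snd = List.range' (D - (m + 1)) (m + 1) := by
      intro q' hinv' t ht
      have := qvseqs_bigAnd' {t | t.map Prod.snd = List.range' (D - (m + 1)) (m + 1)}
        _ (image_toList_map_ne_nil _ _) ?_ ht
      · exact this
      · intro φ hφ
        obtain ⟨χ, hχ, rfl⟩ := List.mem_map.mp hφ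
        obtain ⟨v, -, rfl⟩ := Finset.mem_image.mp (Finset.mem_toList.mp hχ)
        intro t' ht'
        obtain ⟨t'', ht'', rfl⟩ := ht'
        show ((true, D - (m+1)) :: t'').map Prod.snd = _
        rw [List.map_cons, hr]
        congr 1
        exact ih (by omega) q' hinv' _ t'' ht''
    have hfa : ∀ (q' : Set (List Bool)), Inv m q' → ∀ t ∈
        (faPartOf (D - (m + 1)) ((Finset.univ : Finset V).image fun v =>
          desc r D m q' (Function.update σ (D - (m + 1)) v))).qvseqs,
          t.map Prod.snd = List.range' (D - (m + 1)) (m + 1) := by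
      intro q' hinv' t ht
      obtain ⟨t'', ht'', rfl⟩ := ht
      show ((false, D - (m+1)) :: t'').map Prod.snd = _
      rw [List.map_cons, hr]
      congr 1
      have := qvseqs_bigOr' {s | s.map Prod.snd = List.range' (D - m) m}
        _ (image_toList_ne_nil _) ?_ ht''
      · exact this
      · intro φ hφ
        obtain ⟨v, -, rfl⟩ := Finset.mem_image.mp (Finset.mem_toList.mp hφ)
        intro s hs
        exact ih (by omega) q' hinv' _ s hs
    rw [desc]
    rcases inv_child_or hinv with h1 | h2
    · rw [if_pos h1]
      by_cases h2 : {t : List Bool | false :: t ∈ q}.Nonempty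
      · rw [if_pos h2]
        intro t ht
        rcases ht with ht | ht
        · exact hex _ (inv_child_true hinv h1) t ht
        · exact hfa _ (inv_child_false hinv h2) t ht
      · rw [if_neg h2]
        exact hex _ (inv_child_true hinv h1)
    · by_cases h1 : {t : List Bool | true :: t ∈ q}.Nonempty
      · rw [if_pos h1]
        by_cases h2' : {t : List Bool | false :: t ∈ q}.Nonempty
        · rw [if_pos h2']
          intro t ht
          rcases ht with ht | ht
          · exact hex _ (inv_child_true hinv h1) t ht
          · exact hfa _ (inv_child_false hinv h2') t ht
        · rw [if_neg h2']
          exact hex _ (inv_child_true hinv h1)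
      · rw [if_neg h1]
        exact hfa _ (inv_child_false hinv h2)

theorem qstrings_desc : ∀ (m : ℕ) (q : Set (List Bool)), Inv m q → ∀ (σ : ℕ → V),
    (desc r D m q σ).qstrings ⊆ q := by
  intro m
  induction m with
  | zero =>
    intro q hinv σ
    have h0 : [] ∈ q := by
      obtain ⟨t0, ht0⟩ := hinv.1
      have := hinv.2 t0 ht0
      rw [List.length_eq_zero_iff] at this
      rwa [this] at ht0
    exact qstrings_atomDesc r D σ q h0
  | succ m ih =>
    intro q hinv σ
    have hex : ∀ h1 : {t : List Bool | true :: t ∈ q}.Nonempty,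
        (exPartOf (D - (m + 1)) ((Finset.univ : Finset V).image fun v =>
          desc r D m {t | true :: t ∈ q} (Function.update σ (D - (m + 1)) v))).qstrings
          ⊆ q := by
      intro h1
      apply qstrings_bigAnd' _ _ (image_toList_map_ne_nil _ _)
      intro φ hφ
      obtain ⟨χ, hχ, rfl⟩ := List.mem_map.mp hφ
      obtain ⟨v, -, rfl⟩ := Finset.mem_image.mp (Finset.mem_toList.mp hχ)
      intro t ht
      obtain ⟨t', ht', rfl⟩ := ht
      exact ih _ (inv_child_true hinv h1) _ ht'
    have hfa : ∀ h2 : {t : List Bool | false :: t ∈ q}.Nonempty,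
        (faPartOf (D - (m + 1)) ((Finset.univ : Finset V).image fun v =>
          desc r D m {t | false :: t ∈ q} (Function.update σ (D - (m + 1)) v))).qstrings
          ⊆ q := by
      intro h2
      intro t ht
      obtain ⟨t', ht', rfl⟩ := ht
      have := qstrings_bigOr' {s | false :: s ∈ q} _ (image_toList_ne_nil _) ?_ ht'
      · exact this
      · intro φ hφ
        obtain ⟨v, -, rfl⟩ := Finset.mem_image.mp (Finset.mem_toList.mp hφ)
        exact ih _ (inv_child_false hinv h2) _
    rw [desc]
    rcases inv_child_or hinv with h1 | h2
    · rw [if_pos h1]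
      by_cases h2 : {t : List Bool | false :: t ∈ q}.Nonempty
      · rw [if_pos h2]
        intro t ht
        rcases ht with ht | ht
        · exact hex h1 ht
        · exact hfa h2 ht
      · rw [if_neg h2]
        exact hex h1
    · by_cases h1 : {t : List Bool | true :: t ∈ q}.Nonempty
      · rw [if_pos h1]
        by_cases h2' : {t : List Bool | false :: t ∈ q}.Nonempty
        · rw [if_pos h2']
          intro t ht
          rcases ht with ht | ht
          · exact hex h1 ht
          · exact hfa h2' ht
        · rw [if_neg h2']
          exact hex h1
      · rw [if_neg h1]
        exact hfa h2

end Desc3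
end Aux
namespace Aux
open Fml

attribute [local instance] Classical.propDecidable

/-- The bound on the number of distinct descriptions at each level. -/
def NA (D : ℕ) : ℕ → ℕ
  | 0 => D ^ D * 2 ^ (D * D)
  | m + 1 => 2 ^ (2 * NA D m)

/-- The bound on the length of descriptions at each level. -/
def LA (D : ℕ) : ℕ → ℕ
  | 0 => 3 + (D * D) * 10
  | m + 1 => 2 * NA D m * (LA D m + 4) + 11

section Desc4

variable {V : Type} [Fintype V] [Nonempty V]
variable (r : V → V → Prop) (D : ℕ)

theorem desc_count : ∀ (m : ℕ) (q : Set (List Bool)),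
    ∃ T : Finset Fml, T.card ≤ NA D m ∧
      ∀ σ : ℕ → V, desc r D m q σ ∈ T ∧ (desc r D m q σ).len ≤ LA D m := by
  intro m
  induction m with
  | zero =>
    intro q
    refine ⟨Finset.image (atomGen D) Finset.univ, card_atomGen D, fun σ => ⟨?_, ?_⟩⟩
    · exact atomDesc_mem_image r D σ
    · exact len_atomDesc r D σ
  | succ m ih =>
    intro q
    obtain ⟨T1, hT1c, hT1⟩ := ih {t | true :: t ∈ q}
    obtain ⟨T2, hT2c, hT2⟩ := ih {t | false :: t ∈ q}
    set j := D - (m + 1) with hj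
    -- length bound for the existential part
    have hlenex : ∀ (S : Finset Fml), (∀ χ ∈ S, χ.len ≤ LA D m) →
        (exPartOf j S).len ≤ 3 + S.card * (LA D m + 3) := by
      intro S hS
      have := len_bigAnd (LA D m + 2) (S.toList.map (Fml.ex j)) ?_
      · show (bigAnd _).len ≤ _
        simpa [Finset.length_toList, Nat.add_assoc] using this
      · intro φ hφ
        obtain ⟨χ, hχ, rfl⟩ := List.mem_map.mp hφ
        have := hS χ (Finset.mem_toList.mp hχ)
        simp only [Fml.len]
        omega
    have hlenfa : ∀ (S : Finset Fml), (∀ χ ∈ S, χ.len ≤ LA D m) →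
        (faPartOf j S).len ≤ 6 + S.card * (LA D m + 1) := by
      intro S hS
      have := len_bigOr (LA D m) S.toList ?_
      · show Fml.len _ + 2 ≤ _
        simp only [Finset.length_toList] at this
        omega
      · intro φ hφ
        exact hS φ (Finset.mem_toList.mp hφ)
    -- the subordinate finsets
    have hmem1 : ∀ σ : ℕ → V, ((Finset.univ : Finset V).image fun v =>
        desc r D m {t | true :: t ∈ q} (Function.update σ j v)) ∈ T1.powerset := by
      intro σ
      rw [Finset.mem_powerset]
      intro χ hχ
      obtain ⟨v, -, rfl⟩ := Finset.mem_image.mp hχ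
      exact (hT1 _).1
    have hmem2 : ∀ σ : ℕ → V, ((Finset.univ : Finset V).image fun v =>
        desc r D m {t | false :: t ∈ q} (Function.update σ j v)) ∈ T2.powerset := by
      intro σ
      rw [Finset.mem_powerset]
      intro χ hχ
      obtain ⟨v, -, rfl⟩ := Finset.mem_image.mp hχ
      exact (hT2 _).1
    have hcard1 : ∀ σ : ℕ → V, ((Finset.univ : Finset V).image fun v =>
        desc r D m {t | true :: t ∈ q} (Function.update σ j v)).card ≤ NA D m := by
      intro σ
      exact le_trans (Finset.card_le_card (Finset.mem_powerset.mp (hmem1 σ))) hT1c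
    have hcard2 : ∀ σ : ℕ → V, ((Finset.univ : Finset V).image fun v =>
        desc r D m {t | false :: t ∈ q} (Function.update σ j v)).card ≤ NA D m := by
      intro σ
      exact le_trans (Finset.card_le_card (Finset.mem_powerset.mp (hmem2 σ))) hT2c
    have hlen1 : ∀ σ : ℕ → V, ∀ χ ∈ ((Finset.univ : Finset V).image fun v =>
        desc r D m {t | true :: t ∈ q} (Function.update σ j v)), χ.len ≤ LA D m := by
      intro σ χ hχ
      obtain ⟨v, -, rfl⟩ := Finset.mem_image.mp hχ
      exact (hT1 _).2
    have hlen2 : ∀ σ : ℕ → V, ∀ χ ∈ ((Finset.univ : Finset V).image fun v =>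
        desc r D m {t | false :: t ∈ q} (Function.update σ j v)), χ.len ≤ LA D m := by
      intro σ χ hχ
      obtain ⟨v, -, rfl⟩ := Finset.mem_image.mp hχ
      exact (hT2 _).2
    have hNL : ∀ n1 n2 : ℕ, n1 ≤ NA D m → n2 ≤ NA D m →
        (3 + n1 * (LA D m + 3)) + (6 + n2 * (LA D m + 1)) + 1 ≤ LA D (m + 1) := by
      intro n1 n2 h1 h2
      have e1 : n1 * (LA D m + 3) ≤ NA D m * (LA D m + 3) := Nat.mul_le_mul_right _ h1
      have e2 : n2 * (LA D m + 1) ≤ NA D m * (LA D m + 1) := Nat.mul_le_mul_right _ h2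
      have e3 : NA D m * (LA D m + 3) + NA D m * (LA D m + 1) + 10 ≤
          2 * NA D m * (LA D m + 4) + 11 := by
        have : NA D m * (LA D m + 3) + NA D m * (LA D m + 1) ≤
            2 * NA D m * (LA D m + 4) := by
          calc NA D m * (LA D m + 3) + NA D m * (LA D m + 1)
              = NA D m * (2 * LA D m + 4) := by ring
            _ ≤ NA D m * (2 * LA D m + 8) := Nat.mul_le_mul_left _ (by omega)
            _ = 2 * NA D m * (LA D m + 4) := by ring
        omega
      show _ ≤ 2 * NA D m * (LA D m + 4) + 11
      omega
    by_cases h1 : {t : List Bool | true :: t ∈ q}.Nonempty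
    · by_cases h2 : {t : List Bool | false :: t ∈ q}.Nonempty
      · -- both parts present
        refine ⟨Finset.image (fun ST : Finset Fml × Finset Fml =>
          Fml.and (exPartOf j ST.1) (faPartOf j ST.2)) (T1.powerset ×ˢ T2.powerset),
          ?_, fun σ => ⟨?_, ?_⟩⟩
        · calc (Finset.image _ (T1.powerset ×ˢ T2.powerset)).card
              ≤ (T1.powerset ×ˢ T2.powerset).card := Finset.card_image_le
            _ = 2 ^ T1.card * 2 ^ T2.card := by
                rw [Finset.card_product, Finset.card_powerset, Finset.card_powerset]
            _ ≤ 2 ^ NA D m * 2 ^ NA D m :=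
                Nat.mul_le_mul (Nat.pow_le_pow_right (by norm_num) hT1c)
                  (Nat.pow_le_pow_right (by norm_num) hT2c)
            _ = 2 ^ (2 * NA D m) := by rw [← pow_add]; ring_nf
            _ = NA D (m + 1) := rfl
        · rw [desc, if_pos h1, if_pos h2]
          exact Finset.mem_image.mpr ⟨(_, _),
            Finset.mem_product.mpr ⟨hmem1 σ, hmem2 σ⟩, rfl⟩
        · rw [desc, if_pos h1, if_pos h2, ← hj]
          show Fml.len _ + Fml.len _ + 1 ≤ _
          have l1 := hlenex _ (hlen1 σ)
          have l2 := hlenfa _ (hlen2 σ)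
          have := hNL _ _ (hcard1 σ) (hcard2 σ)
          omega
      · -- only the existential part
        refine ⟨Finset.image (fun S : Finset Fml => exPartOf j S) T1.powerset,
          ?_, fun σ => ⟨?_, ?_⟩⟩
        · calc (Finset.image _ T1.powerset).card ≤ T1.powerset.card :=
              Finset.card_image_le
            _ = 2 ^ T1.card := Finset.card_powerset T1
            _ ≤ 2 ^ NA D m := Nat.pow_le_pow_right (by norm_num) hT1c
            _ ≤ 2 ^ (2 * NA D m) := Nat.pow_le_pow_right (by norm_num) (by omega)
            _ = NA D (m + 1) := rfl
        · rw [desc, if_pos h1, if_neg h2]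
          exact Finset.mem_image.mpr ⟨_, hmem1 σ, rfl⟩
        · rw [desc, if_pos h1, if_neg h2, ← hj]
          have l1 := hlenex _ (hlen1 σ)
          have := hNL _ 0 (hcard1 σ) (by omega)
          omega
    · -- only the universal part
      refine ⟨Finset.image (fun S : Finset Fml => faPartOf j S) T2.powerset,
        ?_, fun σ => ⟨?_, ?_⟩⟩
      · calc (Finset.image _ T2.powerset).card ≤ T2.powerset.card :=
            Finset.card_image_le
          _ = 2 ^ T2.card := Finset.card_powerset T2
          _ ≤ 2 ^ NA D m := Nat.pow_le_pow_right (by norm_num) hT2c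
          _ ≤ 2 ^ (2 * NA D m) := Nat.pow_le_pow_right (by norm_num) (by omega)
          _ = NA D (m + 1) := rfl
      · rw [desc, if_neg h1]
        exact Finset.mem_image.mpr ⟨_, hmem2 σ, rfl⟩
      · rw [desc, if_neg h1, ← hj]
        have l2 := hlenfa _ (hlen2 σ)
        have := hNL 0 _ (by omega) (hcard2 σ)
        omega

theorem len_desc (q : Set (List Bool)) (σ : ℕ → V) :
    (desc r D D q σ).len ≤ LA D D := by
  obtain ⟨T, -, h⟩ := desc_count r D D q
  exact (h σ).2

end Desc4
end Aux
namespace Aux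

/-! ### The numerical bound -/

def GA (D m : ℕ) : ℕ := 2 * NA D m + LA D m + 16

theorem NA_ge {D : ℕ} (hD : 2 ≤ D) : ∀ m, 64 ≤ NA D m := by
  intro m
  induction m with
  | zero =>
    show 64 ≤ D ^ D * 2 ^ (D * D)
    have h1 : 4 ≤ D ^ D := by
      calc 4 = 2 ^ 2 := rfl
        _ ≤ D ^ D := Nat.pow_le_pow_left hD D |>.trans' (Nat.pow_le_pow_right (by omega) hD)
    have h2 : 16 ≤ 2 ^ (D * D) := by
      calc (16 : ℕ) = 2 ^ 4 := rfl
        _ ≤ 2 ^ (D * D) := Nat.pow_le_pow_right (by norm_num) (by nlinarith)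
    calc (64 : ℕ) = 4 * 16 := rfl
      _ ≤ D ^ D * 2 ^ (D * D) := Nat.mul_le_mul h1 h2
  | succ m ih =>
    show 64 ≤ 2 ^ (2 * NA D m)
    calc (64 : ℕ) = 2 ^ 6 := rfl
      _ ≤ 2 ^ (2 * NA D m) := Nat.pow_le_pow_right (by norm_num) (by omega)

theorem GA_step {D : ℕ} (hD : 2 ≤ D) (m : ℕ) : GA D (m + 1) ≤ 2 ^ GA D m := by
  have hN := NA_ge hD m
  set N := NA D m with hN'
  set L := LA D m with hL'
  have e1 : 2 * N ≤ 2 ^ (2 * N) := le_of_lt (Nat.lt_two_pow_self)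
  have e2 : (27 : ℕ) ≤ 2 ^ (2 * N) := by
    calc (27 : ℕ) ≤ 2 ^ 5 := by norm_num
      _ ≤ 2 ^ (2 * N) := Nat.pow_le_pow_right (by norm_num) (by omega)
  have e3 : L + 7 ≤ 2 ^ (L + 16) := by
    calc L + 7 ≤ L + 16 := by omega
      _ ≤ 2 ^ (L + 16) := le_of_lt (Nat.lt_two_pow_self)
  have key : 2 * 2 ^ (2 * N) + (2 * N * (L + 4) + 11) + 16 ≤
      2 ^ (2 * N) * 2 ^ (L + 16) := by
    have k1 : 2 * N * (L + 4) ≤ 2 ^ (2 * N) * (L + 4) := Nat.mul_le_mul_right _ e1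
    calc 2 * 2 ^ (2 * N) + (2 * N * (L + 4) + 11) + 16
        ≤ 2 * 2 ^ (2 * N) + (2 ^ (2 * N) * (L + 4) + 11) + 16 := by omega
      _ ≤ 2 ^ (2 * N) * 2 + 2 ^ (2 * N) * (L + 4) + 2 ^ (2 * N) := by omega
      _ = 2 ^ (2 * N) * (L + 7) := by ring
      _ ≤ 2 ^ (2 * N) * 2 ^ (L + 16) := Nat.mul_le_mul_left _ e3
  show 2 * (2 ^ (2 * N)) + (2 * N * (L + 4) + 11) + 16 ≤ 2 ^ (2 * N + L + 16)
  rw [show 2 * N + L + 16 = 2 * N + (L + 16) by omega, pow_add]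
  exact key

theorem GA_le_expIter {D : ℕ} (hD : 2 ≤ D) : ∀ m, GA D m ≤ expIter m (GA D 0) := by
  intro m
  induction m with
  | zero => simp
  | succ m ih =>
    calc GA D (m + 1) ≤ 2 ^ GA D m := GA_step hD m
      _ ≤ 2 ^ expIter m (GA D 0) := Nat.pow_le_pow_right (by norm_num) ih
      _ = expIter (m + 1) (GA D 0) := (expIter_succ' m _).symm

theorem LA_le_sq {D : ℕ} (hD : 1 ≤ D) : LA D D ≤ GA D (D - 1) * GA D (D - 1) := by
  obtain ⟨E, rfl⟩ : ∃ E, D = E + 1 := ⟨D - 1, by omega⟩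
  show 2 * NA (E+1) E * (LA (E+1) E + 4) + 11 ≤ _
  have : E + 1 - 1 = E := by omega
  rw [this]
  show _ ≤ (2 * NA (E+1) E + LA (E+1) E + 16) * (2 * NA (E+1) E + LA (E+1) E + 16)
  nlinarith [Nat.zero_le (NA (E+1) E), Nat.zero_le (LA (E+1) E)]

theorem twenty_bound : ∀ x : ℕ, 9 ≤ x → 20 * x + 38 ≤ 2 ^ x := by
  intro x hx
  induction x with
  | zero => omega
  | succ n ih =>
    rcases Nat.lt_or_ge n 9 with h | h
    · have hn : n + 1 = 9 := by omega
      rw [hn]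
      norm_num
    · have h20 : (20 : ℕ) ≤ 2 ^ n := by
        calc (20 : ℕ) ≤ 2 ^ 5 := by norm_num
          _ ≤ 2 ^ n := Nat.pow_le_pow_right (by norm_num) (by omega)
      have := ih h
      rw [pow_succ]
      omega

theorem lt_two_pow_pred : ∀ D : ℕ, 4 ≤ D → D < 2 ^ (D - 1) := by
  intro D hD
  induction D with
  | zero => omega
  | succ n ih =>
    rcases Nat.lt_or_ge n 4 with h | h
    · have hn : n + 1 = 4 := by omega
      rw [hn]
      norm_num
    · have := ih h
      have h2 : 2 ^ (n - 1) + 1 ≤ 2 ^ n := by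
        have : 2 ^ (n - 1) * 2 = 2 ^ n := by
          rw [← pow_succ]
          congr 1
          omega
        have h1 : 1 ≤ 2 ^ (n - 1) := Nat.one_le_two_pow
        omega
      have h3 : n + 1 + 1 ≤ 2 ^ (n + 1 - 1) := by
        simp only [Nat.add_sub_cancel]
        omega
      omega

theorem fourD_bound : ∀ D : ℕ, 3 ≤ D → 4 * D + 1 ≤ 2 ^ (D + 1) := by
  intro D hD
  induction D with
  | zero => omega
  | succ n ih =>
    rcases Nat.lt_or_ge n 3 with h | h
    · have hn : n + 1 = 3 := by omega
      rw [hn]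
      norm_num
    · have := ih h
      rw [pow_succ]
      have : 4 ≤ 2 ^ (n + 1) := by
        calc (4:ℕ) = 2 ^ 2 := rfl
          _ ≤ 2 ^ (n+1) := Nat.pow_le_pow_right (by norm_num) (by omega)
      omega

theorem quad_bound : ∀ D : ℕ, 4 ≤ D → D * D + (D - 1) * D + 3 < 2 ^ (D + 1) := by
  intro D hD
  induction D with
  | zero => omega
  | succ n ih =>
    rcases Nat.lt_or_ge n 4 with h | h
    · have hn : n + 1 = 4 := by omega
      rw [hn]
      norm_num
    · have h1 := ih h
      have h2 := fourD_bound n (by omega)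
      have e1 : (n+1) * (n+1) + ((n+1) - 1) * (n+1) + 3 =
          (n * n + (n - 1) * n + 3) + (4 * n + 1) := by
        have hn1 : n + 1 - 1 = n := by omega
        rw [hn1]
        have hn2 : n - 1 + 1 = n := by omega
        nlinarith [Nat.sub_add_cancel (by omega : 1 ≤ n)]
      rw [e1, pow_succ]
      omega

/-- The main numeric estimate. -/
theorem LA_lt_tower {D : ℕ} (hD : 2 ≤ D) : LA D D < tower (D + logStar D + 2) := by
  set s := logStar D with hs
  have hs1 : 1 ≤ s := logStar_pos hD
  have hDt : D < tower (s + 1) := lt_tower_logStar D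
  have hGA1 : 1 ≤ GA D 0 := by
    show 1 ≤ 2 * NA D 0 + LA D 0 + 16
    omega
  -- the key bound
  have hkey : 2 * GA D 0 < tower (s + 3) := by
    have hGA0 : 2 * GA D 0 = 4 * (D ^ D * 2 ^ (D * D)) + (20 * (D * D) + 38) := by
      show 2 * (2 * (D ^ D * 2 ^ (D * D)) + (3 + D * D * 10) + 16) = _
      ring
    rcases Nat.lt_or_ge D 4 with hD4 | hD4
    · -- D = 2 or D = 3 : direct computation, using tower (s+3) ≥ tower 4 = 65536
      have ht4 : (65536 : ℕ) ≤ tower (s + 3) := by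
        have : tower 4 ≤ tower (s + 3) := tower_le_tower (by omega)
        have ht : tower 4 = 65536 := by
          show 2 ^ (2 ^ (2 ^ (2 ^ tower 0))) = 65536
          norm_num [tower]
        omega
      have hsmall : 2 * GA D 0 ≤ 55594 := by
        rw [hGA0]
        interval_cases D
        · norm_num
        · norm_num
      omega
    · -- D ≥ 4
      have hk : Nat.log 2 D ≤ D - 2 := by
        have h1 : D < 2 ^ (D - 1) := lt_two_pow_pred D hD4
        have h2 : Nat.log 2 D < D - 1 := Nat.log_lt_of_lt_pow (by omega) h1
        omega
      set k := Nat.log 2 D with hkdef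
      have hDk : D < 2 ^ (k + 1) := Nat.lt_pow_succ_log_self (by norm_num) D
      have hDD : D ^ D ≤ 2 ^ ((k + 1) * D) := by
        calc D ^ D ≤ (2 ^ (k + 1)) ^ D := Nat.pow_le_pow_left (le_of_lt hDk) D
          _ = 2 ^ ((k + 1) * D) := by rw [← pow_mul]
      set E := (k + 1) * D + D * D + 2 with hE
      have h4A : 4 * (D ^ D * 2 ^ (D * D)) ≤ 2 ^ E := by
        calc 4 * (D ^ D * 2 ^ (D * D)) ≤ 4 * (2 ^ ((k + 1) * D) * 2 ^ (D * D)) :=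
            Nat.mul_le_mul_left _ (Nat.mul_le_mul_right _ hDD)
          _ = 2 ^ 2 * (2 ^ ((k + 1) * D) * 2 ^ (D * D)) := by norm_num
          _ = 2 ^ E := by rw [← pow_add, ← pow_add]; congr 1; omega
      have h20' : 20 * (D * D) + 38 ≤ 2 ^ E := by
        have h9 : 9 ≤ D * D := by nlinarith
        have := twenty_bound (D * D) h9
        have h32 : (32:ℕ) ≤ 2 ^ (D * D) := by
          calc (32:ℕ) = 2 ^ 5 := rfl
            _ ≤ 2 ^ (D * D) := Nat.pow_le_pow_right (by norm_num) (by omega)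
        have hmono : 2 ^ (D * D) ≤ 2 ^ E := Nat.pow_le_pow_right (by norm_num) (by
          rw [hE]; omega)
        omega
      have hsum : 2 * GA D 0 ≤ 2 ^ (E + 1) := by
        rw [hGA0, pow_succ]
        omega
      have hE1 : E + 1 < 2 ^ (D + 1) := by
        have h1 : (k + 1) * D ≤ (D - 1) * D := Nat.mul_le_mul_right _ (by omega)
        have h2 := quad_bound D hD4
        have : E + 1 ≤ D * D + (D - 1) * D + 3 := by rw [hE]; omega
        omega
      have hDt' : D + 1 ≤ tower (s + 1) := hDt
      have hstep1 : 2 ^ (D + 1) ≤ tower (s + 2) := by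
        show 2 ^ (D + 1) ≤ 2 ^ tower (s + 1)
        exact Nat.pow_le_pow_right (by norm_num) hDt'
      have hstep2 : 2 ^ (E + 1) < tower (s + 3) := by
        show 2 ^ (E + 1) < 2 ^ tower (s + 2)
        apply Nat.pow_lt_pow_right (by norm_num)
        omega
      omega
  -- assemble
  have h1 : LA D D ≤ GA D (D - 1) * GA D (D - 1) := LA_le_sq (by omega)
  have h2 : GA D (D - 1) ≤ expIter (D - 1) (GA D 0) := GA_le_expIter hD (D - 1)
  have h3 : GA D (D - 1) * GA D (D - 1) ≤
      expIter (D - 1) (GA D 0) * expIter (D - 1) (GA D 0) := Nat.mul_le_mul h2 h2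
  have h4 : expIter (D - 1) (GA D 0) * expIter (D - 1) (GA D 0) ≤
      expIter (D - 1) (2 * GA D 0) := sq_expIter_le (by omega) hGA1
  have h5 : expIter (D - 1) (2 * GA D 0) < expIter (D - 1) (tower (s + 3)) :=
    expIter_lt_expIter (D - 1) hkey
  have h6 : expIter (D - 1) (tower (s + 3)) = tower (D + s + 2) := by
    rw [← tower_add]
    congr 1
    omega
  omega

end Aux
theorem statement_15 (F : Set Fml) (hreg : Regular F)
    {V : Type} [Fintype V] [Nonempty V] (r : V → V → Prop)
    (hdef : ∃ φ ∈ F, DDefines r φ) :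
    sInf {n : ℕ | ∃ φ ∈ F, DDefines r φ ∧ φ.len = n} <
      tower (sInf {n : ℕ | ∃ φ ∈ F, DDefines r φ ∧ φ.depth = n} +
        logStar (sInf {n : ℕ | ∃ φ ∈ F, DDefines r φ ∧ φ.depth = n}) + 2) := by
  classical
  obtain ⟨φ₀, hφ₀F, hφ₀def⟩ := hdef
  set Dset := {n : ℕ | ∃ φ ∈ F, DDefines r φ ∧ φ.depth = n} with hDsetdef
  have hne : Dset.Nonempty := ⟨φ₀.depth, φ₀, hφ₀F, hφ₀def, rfl⟩
  set D := sInf Dset with hDdef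
  obtain ⟨ψ, hψF, hψdef, hψdepth⟩ : ∃ φ ∈ F, DDefines r φ ∧ φ.depth = D :=
    Nat.sInf_mem hne
  have hD2 : 2 ≤ D := hψdepth ▸ Aux.depth_ge_two_of_defines r hψdef
  have hDpos : 0 < D := by omega
  -- normal form of the minimal-depth defining sentence
  have hfv : ψ.freeVars = Finset.range 0 := by
    rw [Finset.range_zero]; exact hψdef.1
  obtain ⟨A', hA'F, hA'norm, hA'depth, hA'equiv⟩ := hreg.2.2.1 ψ hψF 0 hfv
  rw [Nat.zero_add, hψdepth] at hA'norm
  have hA'sent : A'.IsSentence := by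
    have h := hA'norm.2.1
    rw [Finset.range_zero] at h
    exact h
  have hA'def : DDefines r A' := by
    refine ⟨hA'sent, fun σ => (hA'equiv V inferInstance inferInstance r σ).mp
      (hψdef.2.1 σ), ?_⟩
    intro W iF iN r' hniso hmod
    exact hψdef.2.2 W iF iN r' hniso
      (fun σ => (hA'equiv W iF iN r' σ).mpr (hmod σ))
  -- the pattern set
  obtain ⟨P, hPlen, hPiff⟩ := hreg.2.2.2 D (by omega)
  have hA'P : A'.qstrings ⊆ P := (hPiff A' hA'norm).mp hA'F
  -- A' is a piece at level 0
  have hpiece : Aux.Piece D 0 A' :=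
    Aux.normal_piece D A' 0 hA'norm.1 hA'norm.2.2.1 hA'norm.2.2.2.2 (by omega)
  -- the pattern tree of A' satisfies the invariant
  have hinv : Aux.Inv D A'.qstrings := by
    refine ⟨Aux.qstrings_nonempty A', ?_⟩
    intro t ht
    rw [Aux.qstrings_eq_image] at ht
    obtain ⟨t', ht', rfl⟩ := ht
    have h1 := hA'norm.2.2.2.2 t' ht'
    have h2 : (t'.map Prod.fst).length = (t'.map Prod.snd).length := by
      rw [List.length_map, List.length_map]
    rw [h2, h1, List.length_range']
    omega
  -- the short defining sentence
  set σ₀ : ℕ → V := fun _ => Classical.arbitrary V with hσ₀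
  set B := Aux.desc r D D A'.qstrings σ₀ with hBdefn
  have hfvB : B.freeVars = ∅ := by
    have h := Aux.freeVars_desc r D hDpos D (le_refl D) A'.qstrings σ₀
    rw [Nat.sub_self, Finset.range_zero] at h
    exact Finset.subset_empty.mp h
  have hBnorm : Normal 0 D B := by
    refine ⟨Aux.negAtomic_desc r D D _ σ₀, ?_, Aux.vars_desc r D hDpos D _ σ₀, ?_, ?_⟩
    · rw [hfvB, Finset.range_zero]
    · exact Aux.depth_desc r D hDpos D _ hinv σ₀
    · intro t ht
      have h := Aux.qvseqs_desc r D D (le_refl D) _ hinv σ₀ t ht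
      rwa [Nat.sub_self] at h
  have hBF : B ∈ F := by
    refine (hPiff B hBnorm).mpr (subset_trans ?_ hA'P)
    exact Aux.qstrings_desc r D D _ hinv σ₀
  have hBdef : DDefines r B := by
    refine ⟨hfvB, ?_, ?_⟩
    · intro σ
      exact (Aux.eval_congr r B σ₀ σ (by simp [hfvB])).mp
        (Aux.desc_self r D D A'.qstrings σ₀)
    · intro W iF iN r' hniso hmod
      refine hA'def.2.2 W iF iN r' hniso (fun σ' => ?_)
      exact Aux.desc_transfer r D r' hpiece A'.qstrings σ₀ σ'
        (subset_refl _) (hmod σ') (hA'def.2.1 σ₀)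
  -- conclude
  have hlenB : B.len ≤ Aux.LA D D := Aux.len_desc r D A'.qstrings σ₀
  have hinf : sInf {n : ℕ | ∃ φ ∈ F, DDefines r φ ∧ φ.len = n} ≤ B.len :=
    Nat.sInf_le ⟨B, hBF, hBdef, rfl⟩
  have htow := Aux.LA_lt_tower hD2
  omega

end PaperFO
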